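/- arXiv:1506.03293 — 3 statements merged into one kernel-verified Lean document; each statement's English description precedes it below -/
import Mathlib

section
/- For every δ > 0 and every fixed k, for all sufficiently large n: ℙ( Σ_{j=⌈(1−δ²)m⌉}^{m−1} ψ_{j,z} ≤ (5/2) δ log N for all z ∈ V_N ) ≥ 1 − 2e^{−n/10}. -/
open MeasureTheory ProbabilityTheory Real Filter
open scoped NNReal ENNReal Classical

noncomputable section

abbrev Vertex : Type := ℤ × ℤ

/-- ℓ∞ distance on ℤ². -/
def dinf (u v : Vertex) : ℤ := max |u.1 - v.1| |u.2 - v.2|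

/-- Rectangle of lattice points with lower-left corner `c`, width `w`, height `h`. -/
def rectAt (c : Vertex) (w h : ℕ) : Finset Vertex :=
  Finset.Icc c (c.1 + w - 1, c.2 + h - 1)

/-- Lattice box with lower-left corner `c` and side length `s`. -/
def boxAt (c : Vertex) (s : ℕ) : Finset Vertex := rectAt c s s

/-- The box `V_N` of side length `N` with lower-left corner at the origin. -/
def vbox (N : ℕ) : Finset Vertex := boxAt (0, 0) N

/-- The concentric box `B*` of side length `3s` around the box with corner `c` and side `s`. -/
def starBox (c : Vertex) (s : ℕ) : Finset Vertex := boxAt (c.1 - s, c.2 - s) (3 * s)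

/-- Lower-left corners of the lattice boxes of side length `2^j` containing `z`. -/
def corners (j : ℕ) (z : Vertex) : Finset Vertex :=
  Finset.Icc (z.1 - 2 ^ j + 1, z.2 - 2 ^ j + 1) z

/-- ψ_{j,z} = Σ_{B ∈ 𝓑_{jk}(z)} √k b_{jk,B}. -/
def psi {Ω : Type} (b : ℕ × Vertex → Ω → ℝ) (k j : ℕ) (z : Vertex) (ω : Ω) : ℝ :=
  ∑ c ∈ corners (j * k) z, Real.sqrt k * b (j * k, c) ω

/-- The K-coarse MBRW φ_{N,z} = Σ_{j=0}^{m-1} ψ_{j,z} with m = ⌊n/k⌋. -/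
def phi {Ω : Type} (b : ℕ × Vertex → Ω → ℝ) (n k : ℕ) (z : Vertex) (ω : Ω) : ℝ :=
  ∑ j ∈ Finset.range (n / k), psi b k j z ω

/-- The underlying field `b_{j,B}`: independent centered Gaussians, Var(b_{j,B}) = 2^{-2j},
indexed by the level `j` and the lower-left corner of the box `B`. -/
def GaussianSetup {Ω : Type} [MeasureSpace Ω] (b : ℕ × Vertex → Ω → ℝ) : Prop :=
  (∀ i, Measurable (b i)) ∧
  iIndepFun b ℙ ∧
  ∀ (j : ℕ) (c : Vertex), Measure.map (b (j, c)) ℙ = gaussianReal 0 (((2 : ℝ≥0) ^ (2 * j))⁻¹)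

/-- Nearest neighbors in ℤ². -/
def adj (u v : Vertex) : Prop := |u.1 - v.1| + |u.2 - v.2| = 1

/-- A path in `V_N`: a nonempty list of vertices of `V_N`, consecutive ones nearest neighbors. -/
def IsPathIn (N : ℕ) (P : List Vertex) : Prop :=
  P ≠ [] ∧ (∀ w ∈ P, w ∈ vbox N) ∧ P.Chain' adj

/-- The path `P` connects `u` to `v`. -/
def Connects (P : List Vertex) (u v : Vertex) : Prop :=
  P.head? = some u ∧ P.getLast? = some v

/-- FPP distance between `u, v ∈ V_N` for the vertex weights `exp (γ f w)`. -/
def fppOf (N : ℕ) (γ : ℝ) (f : Vertex → ℝ) (u v : Vertex) : ℝ :=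
  sInf {s : ℝ | ∃ P : List Vertex, IsPathIn N P ∧ Connects P u v ∧
    s = (P.map fun w => Real.exp (γ * f w)).sum}

/-- The LQG vertex weight e^{γ φ_{N,v}}. -/
def lqgWeight {Ω : Type} (b : ℕ × Vertex → Ω → ℝ) (n k : ℕ) (γ : ℝ) (v : Vertex) (ω : Ω) : ℝ :=
  Real.exp (γ * phi b n k v ω)

/-- μ_γ × μ_γ of the set of pairs satisfying `A`. -/
def muPair {Ω : Type} (b : ℕ × Vertex → Ω → ℝ) (n k : ℕ) (γ : ℝ)
    (A : Vertex × Vertex → Prop) (ω : Ω) : ℝ :=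
  (∑ p ∈ vbox (2 ^ n) ×ˢ vbox (2 ^ n),
      Set.indicator {p | A p} (fun p => lqgWeight b n k γ p.1 ω * lqgWeight b n k γ p.2 ω) p) /
    (∑ w ∈ vbox (2 ^ n), lqgWeight b n k γ w ω) ^ 2

/-- μ_γ of the set of vertices satisfying `A`. -/
def muSet {Ω : Type} (b : ℕ × Vertex → Ω → ℝ) (n k : ℕ) (γ : ℝ)
    (A : Vertex → Prop) (ω : Ω) : ℝ :=
  (∑ v ∈ vbox (2 ^ n), Set.indicator {v | A v} (fun v => lqgWeight b n k γ v ω) v) /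
    ∑ w ∈ vbox (2 ^ n), lqgWeight b n k γ w ω

/-- σ_{z,w} = E[φ_{N,z} φ_{N,w}]. -/
def covPhi {Ω : Type} [MeasureSpace Ω] (b : ℕ × Vertex → Ω → ℝ) (n k : ℕ) (z w : Vertex) : ℝ :=
  ∫ ω, phi b n k z ω * phi b n k w ω ∂ℙ

/-- Maximum of `f` over a finite set of vertices (as an `sSup`). -/
def fmax (B : Finset Vertex) (f : Vertex → ℝ) : ℝ := sSup (f '' ↑B)

def jzero (δ : ℝ) (n k : ℕ) : ℕ := ⌊(1 - δ ^ 2 / 2) * ((n / k : ℕ) : ℝ)⌋₊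
def Kone (k : ℕ) : ℕ := 2 ^ (k - 2)
def Ktwo (k q : ℕ) : ℕ := 2 ^ k / (q + 1)
def lzero (δ : ℝ) (n k : ℕ) : ℕ := k * ⌊δ ^ 2 * ((n / k : ℕ) : ℝ)⌋₊
def lone (δ κ : ℝ) (n k : ℕ) : ℕ :=
  Nat.log 2 (⌈((2 : ℝ) ^ n) ^ ((1 : ℝ) - 2 * κ)⌉₊ + 2 ^ (lzero δ n k + 1)) - 1

/-- A q-dependent {0,1}-valued field on `V_N` with ℙ(ξ_w = 1) ≥ p. -/
def BernoulliField {Ω : Type} [MeasureSpace Ω] (ξ : Vertex → Ω → ℝ) (N q : ℕ) (p : ℝ) : Prop :=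
  (∀ w, Measurable (ξ w)) ∧
  (∀ w ω, ξ w ω = 0 ∨ ξ w ω = 1) ∧
  (∀ A B : Set Vertex, (∀ z ∈ A, ∀ w ∈ B, (q : ℤ) < dinf z w) →
      IndepFun (fun ω (z : A) => ξ z ω) (fun ω (w : B) => ξ w ω) ℙ) ∧
  (∀ w ∈ vbox N, ENNReal.ofReal p ≤ ℙ {ω | ξ w ω = 1})

/-- The Bernoulli field together with its independence from the Gaussian field. -/
def BernoulliSetup {Ω : Type} [MeasureSpace Ω] (b : ℕ × Vertex → Ω → ℝ)
    (ξ : Vertex → Ω → ℝ) (N q : ℕ) (p : ℝ) : Prop :=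
  BernoulliField ξ N q p ∧
  IndepFun (fun ω (i : ℕ × Vertex) => b i ω) (fun ω (w : Vertex) => ξ w ω) ℙ

/-- A good path: open, and all Gaussian values at most 7δ log N. -/
def GoodPath {Ω : Type} (b : ℕ × Vertex → Ω → ℝ) (ξ : Vertex → Ω → ℝ) (n k : ℕ)
    (δ : ℝ) (P : List Vertex) (ω : Ω) : Prop :=
  (∀ w ∈ P, ξ w ω = 1) ∧ ∀ w ∈ P, phi b n k w ω ≤ 7 * δ * Real.log (2 ^ n)

/-- A `B`-crossing for the box with corner `c` and side `L`: a good top-bottom crossing `Q^V`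
of `B` with `|Q^V| ≤ 4 L^{1+δ}`, and a good left-right crossing `Q^H` of the 4L × L rectangle
`ÁB` with `|Q^H| ≤ 16 L^{1+δ}`. -/
def CrossingAt {Ω : Type} (b : ℕ × Vertex → Ω → ℝ) (ξ : Vertex → Ω → ℝ) (n k : ℕ)
    (δ : ℝ) (c : Vertex) (L : ℕ) (ω : Ω) : Prop :=
  (∃ QV : List Vertex, QV ≠ [] ∧ QV.Chain' adj ∧ (∀ w ∈ QV, w ∈ boxAt c L) ∧
      (∃ u, QV.head? = some u ∧ u.2 = c.2 + L - 1) ∧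
      (∃ v, QV.getLast? = some v ∧ v.2 = c.2) ∧
      ((QV.length : ℝ) ≤ 4 * (L : ℝ) ^ ((1 : ℝ) + δ)) ∧ GoodPath b ξ n k δ QV ω) ∧
  (∃ QH : List Vertex, QH ≠ [] ∧ QH.Chain' adj ∧ (∀ w ∈ QH, w ∈ rectAt c (4 * L) L) ∧
      (∃ u, QH.head? = some u ∧ u.1 = c.1) ∧
      (∃ v, QH.getLast? = some v ∧ v.1 = c.1 + 4 * L - 1) ∧
      ((QH.length : ℝ) ≤ 16 * (L : ℝ) ^ ((1 : ℝ) + δ)) ∧ GoodPath b ξ n k δ QH ω)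

/-- Regression coefficient a_z (and, with `u`, `v` swapped, b_z). -/
def acoef {Ω : Type} [MeasureSpace Ω] (b : ℕ × Vertex → Ω → ℝ) (n k : ℕ)
    (u v z : Vertex) : ℝ :=
  (((k * (n / k) : ℕ) : ℝ) * covPhi b n k z u - covPhi b n k z v * covPhi b n k u v) /
    ((((k * (n / k) : ℕ) : ℝ)) ^ 2 - covPhi b n k u v ^ 2)



lemma gauss_key_aux5 (v : ℝ≥0) (hv : v ≠ 0) (s x : ℝ) :
    gaussianPDFReal 0 v x * Real.exp (s * x)
      = Real.exp ((v:ℝ) * s ^ 2 / 2) * gaussianPDFReal ((v:ℝ) * s) v x := by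
  have hv' : (0:ℝ) < v := by positivity
  simp only [gaussianPDFReal]
  have h : -(x-0)^2/(2*(v:ℝ)) + s*x = (v:ℝ)*s^2/2 + (-(x - (v:ℝ)*s)^2/(2*(v:ℝ))) := by
    field_simp
    ring
  rw [mul_assoc, ← Real.exp_add, h, Real.exp_add]
  ring

lemma gauss_exp_aux5 (v : ℝ≥0) (hv : v ≠ 0) (s : ℝ) :
    Integrable (fun x => Real.exp (s * x)) (gaussianReal 0 v) ∧
    ∫ x, Real.exp (s * x) ∂(gaussianReal 0 v) = Real.exp ((v:ℝ) * s ^ 2 / 2) := by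
  have hmeas : Measurable fun x : ℝ => (gaussianPDFReal 0 v x).toNNReal :=
    (measurable_gaussianPDFReal 0 v).real_toNNReal
  have hpdf : gaussianPDF 0 v = fun x => ((gaussianPDFReal 0 v x).toNNReal : ℝ≥0∞) := by
    ext x; simp [gaussianPDF, ENNReal.ofReal]
  have hco : ∀ x : ℝ, ((gaussianPDFReal 0 v x).toNNReal : ℝ) = gaussianPDFReal 0 v x :=
    fun x => Real.coe_toNNReal _ (gaussianPDFReal_nonneg 0 v x)
  constructor
  · rw [gaussianReal_of_var_ne_zero _ hv, hpdf,
      integrable_withDensity_iff_integrable_coe_smul hmeas]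
    simp only [smul_eq_mul, hco, gauss_key_aux5 v hv s]
    exact (integrable_gaussianPDFReal _ _).const_mul _
  · rw [gaussianReal_of_var_ne_zero _ hv, hpdf,
      integral_withDensity_eq_integral_smul hmeas]
    simp only [NNReal.smul_def, smul_eq_mul, hco, gauss_key_aux5 v hv s]
    rw [integral_const_mul, integral_gaussianPDFReal_eq_one _ hv, mul_one]

lemma gauss_exp_rv5 {Ω : Type} [MeasureSpace Ω] {X : Ω → ℝ} (hX : Measurable X)
    {v : ℝ≥0} (hv : v ≠ 0) (hmap : Measure.map X ℙ = gaussianReal 0 v) (s : ℝ) :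
    Integrable (fun ω => Real.exp (s * X ω)) ℙ ∧
    ∫ ω, Real.exp (s * X ω) ∂ℙ = Real.exp ((v:ℝ) * s ^ 2 / 2) := by
  have hg : AEStronglyMeasurable (fun x : ℝ => Real.exp (s * x)) (Measure.map X ℙ) :=
    (measurable_const.mul measurable_id).exp.aestronglyMeasurable
  constructor
  · have h1 := (gauss_exp_aux5 v hv s).1
    rw [← hmap] at h1
    exact (integrable_map_measure hg hX.aemeasurable).mp h1
  · rw [← integral_map hX.aemeasurable hg, hmap]
    exact (gauss_exp_aux5 v hv s).2

lemma card_corners5 (J : ℕ) (z : Vertex) : (corners J z).card = 2 ^ J * 2 ^ J := by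
  rcases z with ⟨x, y⟩
  have key : ∀ w : ℤ, (Finset.Icc (w - 2 ^ J + 1) w).card = 2 ^ J := by
    intro w
    rw [Int.card_Icc]
    have : w + 1 - (w - 2 ^ J + 1) = ((2 ^ J : ℕ) : ℤ) := by push_cast; ring
    rw [this, Int.toNat_natCast]
  rw [corners, Finset.card_Icc_prod]
  simp only [key]

lemma card_vbox5 (N : ℕ) : (vbox N).card = N * N := by
  rw [vbox, boxAt, rectAt, Finset.card_Icc_prod]
  norm_num

lemma chernoff_z5 {Ω : Type} [MeasureSpace Ω] [IsProbabilityMeasure (ℙ : Measure Ω)]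
    (b : ℕ × Vertex → Ω → ℝ) (hb : GaussianSetup b) (k : ℕ) (hk : 1 ≤ k)
    (a m' : ℕ) (z : Vertex) (lam t : ℝ) (hlam : 0 ≤ lam) :
    ℙ {ω | t ≤ ∑ j ∈ Finset.Ico a m', psi b k j z ω} ≤
      ENNReal.ofReal (Real.exp (-lam * t) *
        Real.exp (((k * (m' - a) : ℕ) : ℝ) * lam ^ 2 / 2)) := by
  obtain ⟨hbmeas, hbindep, hbmap⟩ := hb
  set Y : ℕ × Vertex → Ω → ℝ := fun i ω => Real.sqrt k * b i ω with hY
  have hYmeas : ∀ i, Measurable (Y i) := fun i => (hbmeas i).const_mul _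
  have hYindep : iIndepFun Y ℙ :=
    hbindep.comp (fun _ => fun x => Real.sqrt k * x)
      (fun _ => measurable_const.mul measurable_id)
  have hvne : ∀ J : ℕ, ((2 : ℝ≥0) ^ (2 * J))⁻¹ ≠ 0 := by
    intro J
    simp
  have hkey : ∀ J : ℕ, ∀ c : Vertex,
      Integrable (fun ω => Real.exp (lam * Y (J, c) ω)) ℙ ∧
      ∫ ω, Real.exp (lam * Y (J, c) ω) ∂ℙ
        = Real.exp ((((2:ℝ) ^ (2 * J))⁻¹) * ((k : ℝ) * lam ^ 2) / 2) := by
    intro J c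
    have h := gauss_exp_rv5 (hbmeas (J, c)) (hvne J) (hbmap J c) (lam * Real.sqrt k)
    have heq : ∀ ω, lam * Y (J, c) ω = (lam * Real.sqrt k) * b (J, c) ω := by
      intro ω; simp only [hY]; ring
    have hval : ((((2 : ℝ≥0) ^ (2 * J))⁻¹ : ℝ≥0) : ℝ) * (lam * Real.sqrt k) ^ 2 / 2
        = (((2:ℝ) ^ (2 * J))⁻¹) * ((k : ℝ) * lam ^ 2) / 2 := by
      rw [mul_pow, Real.sq_sqrt (Nat.cast_nonneg k)]
      push_cast
      ring
    constructor
    · simpa only [heq] using h.1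
    · rw [show (fun ω => Real.exp (lam * Y (J, c) ω))
          = fun ω => Real.exp ((lam * Real.sqrt k) * b (J, c) ω) by funext ω; rw [heq]]
      rw [h.2, hval]
  set T : Finset (ℕ × Vertex) :=
    (Finset.Ico a m').biUnion (fun j => (corners (j * k) z).image fun c => (j * k, c)) with hT
  have hdisj : (↑(Finset.Ico a m') : Set ℕ).PairwiseDisjoint
      (fun j => (corners (j * k) z).image fun c => ((j * k, c) : ℕ × Vertex)) := by
    intro j _ j' _ hjj'
    simp only [Function.onFun]
    rw [Finset.disjoint_left]
    rintro p hp hp'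
    obtain ⟨c, _, rfl⟩ := Finset.mem_image.mp hp
    obtain ⟨c', _, hc'⟩ := Finset.mem_image.mp hp'
    have h1 : j' * k = j * k := congrArg Prod.fst hc'
    exact hjj' (Nat.eq_of_mul_eq_mul_right hk h1).symm
  have hfun : (fun ω => ∑ j ∈ Finset.Ico a m', psi b k j z ω) = ∑ i ∈ T, Y i := by
    funext ω
    rw [Finset.sum_apply, hT, Finset.sum_biUnion hdisj]
    refine Finset.sum_congr rfl fun j _ => ?_
    rw [Finset.sum_image (fun c _ c' _ h => (Prod.ext_iff.mp h).2)]
    rfl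
  have hint : Integrable (fun ω => Real.exp (lam * (∑ i ∈ T, Y i) ω)) ℙ :=
    hYindep.integrable_exp_mul_sum hYmeas (fun i _ => (hkey i.1 i.2).1)
  have hmgf : mgf (∑ i ∈ T, Y i) ℙ lam
      = Real.exp (((k * (m' - a) : ℕ) : ℝ) * lam ^ 2 / 2) := by
    rw [hYindep.mgf_sum hYmeas T, hT, Finset.prod_biUnion hdisj]
    have hinner : ∀ j : ℕ,
        (∏ i ∈ (corners (j * k) z).image (fun c => ((j * k, c) : ℕ × Vertex)),
          mgf (Y i) ℙ lam) = Real.exp ((k : ℝ) * lam ^ 2 / 2) := by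
      intro j
      rw [Finset.prod_image (fun c _ c' _ h => (Prod.ext_iff.mp h).2)]
      have : ∀ c ∈ corners (j * k) z, mgf (Y (j * k, c)) ℙ lam
          = Real.exp ((((2:ℝ) ^ (2 * (j * k)))⁻¹) * ((k : ℝ) * lam ^ 2) / 2) :=
        fun c _ => (hkey (j * k) c).2
      rw [Finset.prod_congr rfl this, Finset.prod_const, card_corners5,
        ← Real.exp_nat_mul]
      congr 1
      have h2 : ((2 ^ (j * k) * 2 ^ (j * k) : ℕ) : ℝ) = (2 : ℝ) ^ (2 * (j * k)) := by
        push_cast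
        rw [two_mul, pow_add]
      rw [h2]
      have hpos : (0:ℝ) < (2 : ℝ) ^ (2 * (j * k)) := by positivity
      field_simp
    rw [Finset.prod_congr rfl (fun j _ => hinner j), Finset.prod_const, Nat.card_Ico,
      ← Real.exp_nat_mul]
    congr 1
    push_cast
    ring
  have hset : {ω | t ≤ ∑ j ∈ Finset.Ico a m', psi b k j z ω}
      = {ω | t ≤ (∑ i ∈ T, Y i) ω} := by
    ext ω
    rw [Set.mem_setOf_eq, Set.mem_setOf_eq, congrFun hfun ω]
  rw [hset]
  have hch := measure_ge_le_exp_mul_mgf (X := ∑ i ∈ T, Y i) (μ := ℙ) t hlam hint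
  rw [hmgf] at hch
  calc ℙ {ω | t ≤ (∑ i ∈ T, Y i) ω}
      = ENNReal.ofReal ((ℙ {ω | t ≤ (∑ i ∈ T, Y i) ω}).toReal) :=
        (ENNReal.ofReal_toReal (measure_ne_top _ _)).symm
    _ ≤ _ := ENNReal.ofReal_le_ofReal hch


set_option maxHeartbeats 1000000

/-- **Lemma 2.3, first part.** For all large n, with probability at least 1 - 2e^{-n/10},
Σ_{j=⌈(1-δ²)m⌉}^{m-1} ψ_{j,z} ≤ (5/2) δ log N simultaneously for all z ∈ V_N. -/
theorem statement5 {Ω : Type} [MeasureSpace Ω] [IsProbabilityMeasure (ℙ : Measure Ω)]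
    (b : ℕ × Vertex → Ω → ℝ) (hb : GaussianSetup b)
    (δ : ℝ) (hδ : 0 < δ) (k : ℕ) (hk : 1 ≤ k) :
    ∀ᶠ n : ℕ in atTop,
      ℙ {ω | ∀ z ∈ vbox (2 ^ n),
            ∑ j ∈ Finset.Ico (⌈(1 - δ ^ 2) * ((n / k : ℕ) : ℝ)⌉₊) (n / k), psi b k j z ω ≤
              5 / 2 * δ * Real.log (2 ^ n)}
        ≥ ENNReal.ofReal (1 - 2 * Real.exp (-(n : ℝ) / 10)) := by
  have hδ2 : (0:ℝ) < δ ^ 2 := by positivity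
  filter_upwards [eventually_ge_atTop 1] with n hn
  have hn1 : (1:ℝ) ≤ (n:ℝ) := by exact_mod_cast hn
  have hnpos : (0:ℝ) < n := by linarith
  have hl2 : (0:ℝ) < Real.log 2 := Real.log_pos one_lt_two
  set m := n / k with hm
  set a := ⌈(1 - δ ^ 2) * ((m : ℕ) : ℝ)⌉₊ with ha
  set t : ℝ := 5 / 2 * δ * Real.log (2 ^ n) with htdef
  have hlog : Real.log ((2:ℝ) ^ n) = n * Real.log 2 := by rw [Real.log_pow]
  have ht : 0 < t := by rw [htdef, hlog]; positivity
  set V : ℝ := δ ^ 2 * n with hVdef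
  have hV : 0 < V := by positivity
  set lam : ℝ := t / V with hlamdef
  have hlam : 0 ≤ lam := le_of_lt (div_pos ht hV)
  have hσ : ((k * (m - a) : ℕ) : ℝ) ≤ V := by
    rcases le_or_gt m a with h | h
    · rw [Nat.sub_eq_zero_of_le h]
      simp only [Nat.mul_zero, Nat.cast_zero]
      positivity
    · have hac : ((1 - δ ^ 2) * (m : ℝ)) ≤ (a : ℝ) := Nat.le_ceil _
      have h1 : (m : ℝ) - (a : ℝ) ≤ δ ^ 2 * m := by nlinarith
      have h4 : ((k * m : ℕ) : ℝ) ≤ (n : ℝ) := by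
        exact_mod_cast (by rw [mul_comm]; exact Nat.div_mul_le_self n k : k * m ≤ n)
      rw [Nat.cast_mul, Nat.cast_sub h.le]
      calc (k:ℝ) * ((m:ℝ) - a) ≤ (k:ℝ) * (δ ^ 2 * m) :=
            mul_le_mul_of_nonneg_left h1 (Nat.cast_nonneg k)
        _ = δ ^ 2 * ((k * m : ℕ):ℝ) := by push_cast; ring
        _ ≤ δ ^ 2 * n := by nlinarith
        _ = V := rfl
  have hz : ∀ z : Vertex, ℙ {ω | t ≤ ∑ j ∈ Finset.Ico a m, psi b k j z ω} ≤
      ENNReal.ofReal (Real.exp (-(t ^ 2) / (2 * V))) := by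
    intro z
    refine (chernoff_z5 b hb k hk a m z lam t hlam).trans (ENNReal.ofReal_le_ofReal ?_)
    rw [← Real.exp_add]
    apply Real.exp_le_exp.mpr
    have h1 : ((k * (m - a) : ℕ) : ℝ) * lam ^ 2 / 2 ≤ V * lam ^ 2 / 2 := by
      nlinarith [sq_nonneg lam]
    have h2 : -lam * t + V * lam ^ 2 / 2 = -(t ^ 2) / (2 * V) := by
      rw [hlamdef]; field_simp; ring
    linarith
  have hSmeas : ∀ z : Vertex, Measurable (fun ω => ∑ j ∈ Finset.Ico a m, psi b k j z ω) := by
    intro z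
    apply Finset.measurable_sum
    intro j _
    unfold psi
    apply Finset.measurable_sum
    intro c _
    exact (hb.1 _).const_mul _
  set E := {ω | ∀ z ∈ vbox (2 ^ n), ∑ j ∈ Finset.Ico a m, psi b k j z ω ≤ t} with hEdef
  have hEeq : E = ⋂ z ∈ vbox (2 ^ n), {ω | ∑ j ∈ Finset.Ico a m, psi b k j z ω ≤ t} := by
    ext ω; simp [hEdef]
  have hE : MeasurableSet E := by
    rw [hEeq]
    exact Finset.measurableSet_biInter _ fun z _ =>
      measurableSet_le (hSmeas z) measurable_const
  have hnum : ((2 ^ n * 2 ^ n : ℕ) : ℝ) * Real.exp (-(t ^ 2) / (2 * V)) ≤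
      2 * Real.exp (-(n:ℝ) / 10) := by
    have hpow : ((2:ℝ)) ^ n = Real.exp ((n:ℝ) * Real.log 2) := by
      rw [← Real.rpow_natCast 2 n, Real.rpow_def_of_pos (by norm_num : (0:ℝ) < 2), mul_comm]
    have hc : ((2 ^ n * 2 ^ n : ℕ) : ℝ)
        = Real.exp ((n:ℝ) * Real.log 2) * Real.exp ((n:ℝ) * Real.log 2) := by
      push_cast
      rw [hpow]
    have hexp : t ^ 2 / (2 * V) = 25 / 8 * n * (Real.log 2) ^ 2 := by
      rw [htdef, hVdef, hlog]
      field_simp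
      ring
    rw [hc, ← Real.exp_add, neg_div, hexp, ← Real.exp_add]
    have hq : 0 ≤ 25 / 8 * (Real.log 2) ^ 2 - 2 * Real.log 2 - 1 / 10 := by
      nlinarith [Real.log_two_gt_d9, sq_nonneg (Real.log 2 - 0.6931471803)]
    have harg : (n:ℝ) * Real.log 2 + (n:ℝ) * Real.log 2 +
        -(25 / 8 * n * (Real.log 2) ^ 2) ≤ -(n:ℝ) / 10 := by
      nlinarith [mul_nonneg hq hnpos.le]
    calc Real.exp ((n:ℝ) * Real.log 2 + (n:ℝ) * Real.log 2 +
          -(25 / 8 * n * (Real.log 2) ^ 2)) ≤ Real.exp (-(n:ℝ) / 10) :=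
          Real.exp_le_exp.mpr harg
      _ ≤ 2 * Real.exp (-(n:ℝ) / 10) := by nlinarith [Real.exp_pos (-(n:ℝ) / 10)]
  have hcompl : ℙ Eᶜ ≤ ENNReal.ofReal (2 * Real.exp (-(n:ℝ) / 10)) := by
    have hsub : Eᶜ ⊆ ⋃ z ∈ vbox (2 ^ n), {ω | t ≤ ∑ j ∈ Finset.Ico a m, psi b k j z ω} := by
      intro ω hω
      simp only [hEdef, Set.mem_compl_iff, Set.mem_setOf_eq, not_forall] at hω
      obtain ⟨z, hz1, hz2⟩ := hω
      exact Set.mem_biUnion hz1 (le_of_lt (lt_of_not_ge hz2))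
    refine (measure_mono hsub).trans ((measure_biUnion_finset_le _ _).trans ?_)
    calc ∑ z ∈ vbox (2 ^ n), ℙ {ω | t ≤ ∑ j ∈ Finset.Ico a m, psi b k j z ω}
        ≤ ∑ _z ∈ vbox (2 ^ n), ENNReal.ofReal (Real.exp (-(t ^ 2) / (2 * V))) :=
          Finset.sum_le_sum fun z _ => hz z
      _ = ((vbox (2 ^ n)).card : ℝ≥0∞) * ENNReal.ofReal (Real.exp (-(t ^ 2) / (2 * V))) := by
          rw [Finset.sum_const, nsmul_eq_mul]
      _ = ENNReal.ofReal (((2 ^ n * 2 ^ n : ℕ) : ℝ) * Real.exp (-(t ^ 2) / (2 * V))) := by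
          rw [card_vbox5, ENNReal.ofReal_mul (by positivity), ENNReal.ofReal_natCast]
      _ ≤ ENNReal.ofReal (2 * Real.exp (-(n:ℝ) / 10)) := ENNReal.ofReal_le_ofReal hnum
  calc ENNReal.ofReal (1 - 2 * Real.exp (-(n:ℝ) / 10))
      = 1 - ENNReal.ofReal (2 * Real.exp (-(n:ℝ) / 10)) := by
        rw [ENNReal.ofReal_sub _ (by positivity), ENNReal.ofReal_one]
    _ ≤ 1 - ℙ Eᶜ := tsub_le_tsub_left hcompl 1
    _ = ℙ E := by rw [← prob_compl_eq_one_sub hE.compl, compl_compl]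


end
end

section
/- For every fixed k, for all sufficiently large n: ℙ( |φ_{N,u} − φ_{N,v}| ≤ 100 √(K log N) for all u, v ∈ V_N that are nearest neighbors in ℤ² ) ≥ 1 − e^{−n/10}. -/
open MeasureTheory ProbabilityTheory Real Filter
open scoped NNReal ENNReal Classical

noncomputable section

/-! ### Auxiliary lemmas for statement6 -/

lemma st6_gauss_pdf_shift (t : ℝ) {v : ℝ≥0} (hv : v ≠ 0) (x : ℝ) :
    gaussianPDFReal 0 v x * Real.exp (t * x)
      = Real.exp ((v : ℝ) * t ^ 2 / 2) * gaussianPDFReal (t * v) v x := by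
  have hv' : (v : ℝ) ≠ 0 := by exact_mod_cast hv
  unfold gaussianPDFReal
  have h1 : -(x - 0) ^ 2 / (2 * (v : ℝ)) + t * x
      = (v : ℝ) * t ^ 2 / 2 + -(x - t * (v : ℝ)) ^ 2 / (2 * (v : ℝ)) := by
    field_simp
    ring
  rw [mul_assoc, ← Real.exp_add, h1, Real.exp_add]
  ring

lemma st6_integrable_exp_mul_gaussianReal (t : ℝ) (v : ℝ≥0) :
    Integrable (fun x => Real.exp (t * x)) (gaussianReal 0 v) := by
  by_cases hv : v = 0
  · subst hv
    rw [gaussianReal_zero_var]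
    refine (integrable_const (Real.exp (t * 0))).congr ?_
    rw [ae_dirac_eq]
    exact Filter.eventually_pure.2 rfl
  · rw [gaussianReal_of_var_ne_zero _ hv]
    have hmeq : gaussianPDF 0 v
        = fun x => ((Real.toNNReal (gaussianPDFReal 0 v x) : ℝ≥0) : ℝ≥0∞) := by
      funext x; rfl
    rw [hmeq]
    rw [integrable_withDensity_iff_integrable_smul
      ((measurable_gaussianPDFReal 0 v).real_toNNReal)]
    have : (fun x => (Real.toNNReal (gaussianPDFReal 0 v x)) • Real.exp (t * x))
        = fun x => Real.exp ((v : ℝ) * t ^ 2 / 2) * gaussianPDFReal (t * v) v x := by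
      funext x
      rw [NNReal.smul_def, smul_eq_mul, Real.coe_toNNReal _ (gaussianPDFReal_nonneg _ _ _)]
      exact st6_gauss_pdf_shift t hv x
    rw [this]
    exact (integrable_gaussianPDFReal _ _).const_mul _

lemma st6_integral_exp_mul_gaussianReal (t : ℝ) (v : ℝ≥0) :
    ∫ x, Real.exp (t * x) ∂(gaussianReal 0 v) = Real.exp ((v : ℝ) * t ^ 2 / 2) := by
  by_cases hv : v = 0
  · subst hv
    rw [gaussianReal_zero_var, integral_dirac]
    simp
  · rw [gaussianReal_of_var_ne_zero _ hv]
    have hmeq : gaussianPDF 0 v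
        = fun x => ((Real.toNNReal (gaussianPDFReal 0 v x) : ℝ≥0) : ℝ≥0∞) := by
      funext x; rfl
    rw [hmeq]
    rw [integral_withDensity_eq_integral_smul
      ((measurable_gaussianPDFReal 0 v).real_toNNReal)]
    have : (fun x => (Real.toNNReal (gaussianPDFReal 0 v x)) • Real.exp (t * x))
        = fun x => Real.exp ((v : ℝ) * t ^ 2 / 2) * gaussianPDFReal (t * v) v x := by
      funext x
      rw [NNReal.smul_def, smul_eq_mul, Real.coe_toNNReal _ (gaussianPDFReal_nonneg _ _ _)]
      exact st6_gauss_pdf_shift t hv x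
    rw [this, integral_const_mul, integral_gaussianPDFReal_eq_one _ hv, mul_one]

lemma st6_integrable_exp_of_gaussian {Ω : Type} [MeasureSpace Ω]
    {X : Ω → ℝ} (hXm : Measurable X) {v : ℝ≥0}
    (hX : Measure.map X ℙ = gaussianReal 0 v) (t : ℝ) :
    Integrable (fun ω => Real.exp (t * X ω)) ℙ := by
  have h := st6_integrable_exp_mul_gaussianReal t v
  rw [← hX] at h
  rw [integrable_map_measure ((measurable_const_mul t).exp.aestronglyMeasurable)
    hXm.aemeasurable] at h
  exact h

lemma st6_mgf_of_gaussian {Ω : Type} [MeasureSpace Ω]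
    {X : Ω → ℝ} (hXm : Measurable X) {v : ℝ≥0}
    (hX : Measure.map X ℙ = gaussianReal 0 v) (t : ℝ) :
    mgf X ℙ t = Real.exp ((v : ℝ) * t ^ 2 / 2) := by
  rw [mgf, ← st6_integral_exp_mul_gaussianReal t v, ← hX,
    integral_map hXm.aemeasurable ((measurable_const_mul t).exp.aestronglyMeasurable)]

lemma st6_sum_gaussian_tail {Ω : Type} [MeasureSpace Ω] [IsProbabilityMeasure (ℙ : Measure Ω)]
    (b : ℕ × Vertex → Ω → ℝ) (hb : GaussianSetup b)
    (a : ℕ × Vertex → ℝ) (s : Finset (ℕ × Vertex)) {V ε : ℝ}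
    (hV : ∑ i ∈ s, a i ^ 2 * ((2 : ℝ) ^ (2 * i.1))⁻¹ ≤ V) (hVpos : 0 < V) (hε : 0 ≤ ε) :
    ℙ {ω | ε ≤ |∑ i ∈ s, a i * b i ω|}
      ≤ ENNReal.ofReal (2 * Real.exp (-ε ^ 2 / (2 * V))) := by
  set Y : ℕ × Vertex → Ω → ℝ := fun i ω => a i * b i ω with hY
  have hYmeas : ∀ i, Measurable (Y i) := fun i => (hb.1 i).const_mul _
  have hYindep : iIndepFun Y ℙ :=
    hb.2.1.comp (fun i x => a i * x) (fun i => measurable_const_mul _)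
  set w : ℕ × Vertex → ℝ≥0 := fun i =>
    Real.toNNReal (a i ^ 2) * ((2 : ℝ≥0) ^ (2 * i.1))⁻¹ with hw
  have hYmap : ∀ i, Measure.map (Y i) ℙ = gaussianReal 0 (w i) := by
    intro i
    have h0 := hb.2.2 i.1 i.2
    have h1 := gaussianReal_const_mul (X := b (i.1, i.2))
      (P := ℙ) (by rw [Prod.mk.eta] at h0 ⊢; exact ⟨(hb.1 _).aemeasurable, h0⟩) (a i)
    rw [mul_zero] at h1
    have hveq : (NNReal.mk (a i ^ 2) (sq_nonneg (a i)) : ℝ≥0) = Real.toNNReal (a i ^ 2) :=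
      NNReal.coe_inj.mp (by rw [Real.coe_toNNReal _ (sq_nonneg (a i))]; rfl)
    rw [hveq] at h1
    simpa [hY, hw] using h1.map_eq
  have hwr : ∀ i, ((w i : ℝ≥0) : ℝ) = a i ^ 2 * ((2 : ℝ) ^ (2 * i.1))⁻¹ := by
    intro i
    rw [hw]
    push_cast [Real.coe_toNNReal _ (sq_nonneg (a i))]
    ring
  have hint : ∀ (t : ℝ), Integrable (fun ω => Real.exp (t * (∑ i ∈ s, Y i) ω)) ℙ := by
    intro t
    exact hYindep.integrable_exp_mul_sum hYmeas
      (fun i _ => st6_integrable_exp_of_gaussian (hYmeas i) (hYmap i) t)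
  set W : ℝ := ∑ i ∈ s, ((w i : ℝ≥0) : ℝ) with hWd
  have hWV : W ≤ V := le_trans (le_of_eq (Finset.sum_congr rfl fun i _ => hwr i)) hV
  have hW0 : 0 ≤ W := Finset.sum_nonneg fun i _ => (w i).2
  have hmgf : ∀ (t : ℝ), mgf (∑ i ∈ s, Y i) ℙ t = Real.exp (W * t ^ 2 / 2) := by
    intro t
    rw [hYindep.mgf_sum hYmeas]
    calc ∏ i ∈ s, mgf (Y i) ℙ t
        = ∏ i ∈ s, Real.exp (((w i : ℝ≥0) : ℝ) * t ^ 2 / 2) :=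
          Finset.prod_congr rfl fun i _ => st6_mgf_of_gaussian (hYmeas i) (hYmap i) t
      _ = Real.exp (∑ i ∈ s, ((w i : ℝ≥0) : ℝ) * t ^ 2 / 2) := (Real.exp_sum _ _).symm
      _ = Real.exp (W * t ^ 2 / 2) := by rw [hWd, ← Finset.sum_div, ← Finset.sum_mul]
  have hup : (ℙ {ω | ε ≤ (∑ i ∈ s, Y i) ω}).toReal ≤ Real.exp (-ε ^ 2 / (2 * V)) := by
    have h := measure_ge_le_exp_mul_mgf (μ := ℙ) (X := ∑ i ∈ s, Y i) ε
      (t := ε / V) (div_nonneg hε hVpos.le) (hint _)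
    rw [hmgf] at h
    refine h.trans ?_
    rw [← Real.exp_add]
    apply Real.exp_le_exp.2
    have h2 : W * (ε / V) ^ 2 / 2 ≤ V * (ε / V) ^ 2 / 2 := by nlinarith [sq_nonneg (ε / V)]
    have h3 : -(ε / V) * ε + V * (ε / V) ^ 2 / 2 = -ε ^ 2 / (2 * V) := by field_simp; ring
    linarith
  have hlo : (ℙ {ω | (∑ i ∈ s, Y i) ω ≤ -ε}).toReal ≤ Real.exp (-ε ^ 2 / (2 * V)) := by
    have h := measure_le_le_exp_mul_mgf (μ := ℙ) (X := ∑ i ∈ s, Y i) (-ε)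
      (t := -(ε / V)) (neg_nonpos.2 (div_nonneg hε hVpos.le)) (hint _)
    rw [hmgf] at h
    refine h.trans ?_
    rw [← Real.exp_add]
    apply Real.exp_le_exp.2
    have h2 : W * (-(ε / V)) ^ 2 / 2 ≤ V * (-(ε / V)) ^ 2 / 2 := by
      nlinarith [sq_nonneg (ε / V)]
    have h3 : -(-(ε / V)) * (-ε) + V * (-(ε / V)) ^ 2 / 2 = -ε ^ 2 / (2 * V) := by
      field_simp; ring
    linarith
  have hsum : ∀ ω, (∑ i ∈ s, Y i) ω = ∑ i ∈ s, a i * b i ω := by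
    intro ω; rw [Finset.sum_apply]
  have hsubset : {ω | ε ≤ |∑ i ∈ s, a i * b i ω|}
      ⊆ {ω | ε ≤ (∑ i ∈ s, Y i) ω} ∪ {ω | (∑ i ∈ s, Y i) ω ≤ -ε} := by
    intro ω hω
    simp only [Set.mem_setOf_eq, Set.mem_union, hsum ω]
    simp only [Set.mem_setOf_eq] at hω
    rcases abs_cases (∑ i ∈ s, a i * b i ω) with ⟨he, _⟩ | ⟨he, _⟩
    · left; linarith
    · right; linarith
  have e1 : ℙ {ω | ε ≤ (∑ i ∈ s, Y i) ω} ≤ ENNReal.ofReal (Real.exp (-ε ^ 2 / (2 * V))) := by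
    rw [← ENNReal.ofReal_toReal (measure_ne_top ℙ _)]
    exact ENNReal.ofReal_le_ofReal hup
  have e2 : ℙ {ω | (∑ i ∈ s, Y i) ω ≤ -ε} ≤ ENNReal.ofReal (Real.exp (-ε ^ 2 / (2 * V))) := by
    rw [← ENNReal.ofReal_toReal (measure_ne_top ℙ _)]
    exact ENNReal.ofReal_le_ofReal hlo
  refine le_trans (le_trans (measure_mono hsubset) (measure_union_le _ _)) ?_
  refine le_trans (add_le_add e1 e2) ?_
  rw [← ENNReal.ofReal_add (by positivity) (by positivity)]
  exact ENNReal.ofReal_le_ofReal (by linarith)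

lemma st6_adj_cases {u v : Vertex} (h : adj u v) :
    (v.1 = u.1 + 1 ∧ v.2 = u.2) ∨ (u.1 = v.1 + 1 ∧ v.2 = u.2) ∨
    (v.2 = u.2 + 1 ∧ v.1 = u.1) ∨ (u.2 = v.2 + 1 ∧ v.1 = u.1) := by
  unfold adj at h
  rcases abs_cases (u.1 - v.1) with ⟨h1, h1'⟩ | ⟨h1, h1'⟩ <;>
    rcases abs_cases (u.2 - v.2) with ⟨h2, h2'⟩ | ⟨h2, h2'⟩ <;>
      rw [h1, h2] at h <;> omega

lemma st6_adj_symm {u v : Vertex} (h : adj u v) : adj v u := by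
  unfold adj at h ⊢
  rw [abs_sub_comm v.1 u.1, abs_sub_comm v.2 u.2]
  exact h

lemma st6_card_thin_Icc (a c d : ℤ) {J : ℕ} (hd : d + 1 - c = 2 ^ J) :
    (Finset.Icc ((a, c) : Vertex) (a, d)).card = 2 ^ J := by
  rw [Finset.card_Icc_prod]
  simp only [Int.card_Icc]
  have h1 : (a + 1 - a).toNat = 1 := by omega
  rw [h1, one_mul, hd]
  rw [show ((2 : ℤ) ^ J) = ((2 ^ J : ℕ) : ℤ) by push_cast; ring, Int.toNat_natCast]

lemma st6_card_thin_Icc' (c d a : ℤ) {J : ℕ} (hd : d + 1 - c = 2 ^ J) :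
    (Finset.Icc ((c, a) : Vertex) (d, a)).card = 2 ^ J := by
  rw [Finset.card_Icc_prod]
  simp only [Int.card_Icc]
  have h1 : (a + 1 - a).toNat = 1 := by omega
  rw [h1, mul_one, hd]
  rw [show ((2 : ℤ) ^ J) = ((2 ^ J : ℕ) : ℤ) by push_cast; ring, Int.toNat_natCast]

lemma st6_card_corners_sdiff {J : ℕ} {u v : Vertex} (h : adj u v) :
    ((corners J u) \ (corners J v)).card ≤ 2 ^ J := by
  rcases st6_adj_cases h with ⟨h1, h2⟩ | ⟨h1, h2⟩ | ⟨h1, h2⟩ | ⟨h1, h2⟩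
  · refine le_trans (Finset.card_le_card (show _ ⊆
        Finset.Icc ((u.1 - 2 ^ J + 1, u.2 - 2 ^ J + 1) : Vertex) (u.1 - 2 ^ J + 1, u.2)
        from ?_)) (le_of_eq (st6_card_thin_Icc _ _ _ (by ring)))
    intro x hx
    simp only [corners, Finset.mem_sdiff, Finset.mem_Icc, Prod.le_def] at hx ⊢
    omega
  · refine le_trans (Finset.card_le_card (show _ ⊆
        Finset.Icc ((u.1, u.2 - 2 ^ J + 1) : Vertex) (u.1, u.2)
        from ?_)) (le_of_eq (st6_card_thin_Icc _ _ _ (by ring)))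
    intro x hx
    simp only [corners, Finset.mem_sdiff, Finset.mem_Icc, Prod.le_def] at hx ⊢
    omega
  · refine le_trans (Finset.card_le_card (show _ ⊆
        Finset.Icc ((u.1 - 2 ^ J + 1, u.2 - 2 ^ J + 1) : Vertex) (u.1, u.2 - 2 ^ J + 1)
        from ?_)) (le_of_eq (st6_card_thin_Icc' _ _ _ (by ring)))
    intro x hx
    simp only [corners, Finset.mem_sdiff, Finset.mem_Icc, Prod.le_def] at hx ⊢
    omega
  · refine le_trans (Finset.card_le_card (show _ ⊆
        Finset.Icc ((u.1 - 2 ^ J + 1, u.2) : Vertex) (u.1, u.2)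
        from ?_)) (le_of_eq (st6_card_thin_Icc' _ _ _ (by ring)))
    intro x hx
    simp only [corners, Finset.mem_sdiff, Finset.mem_Icc, Prod.le_def] at hx ⊢
    omega

lemma st6_sum_sq_coef {J : ℕ} {u v : Vertex} (h : adj u v) (k : ℕ) :
    ∑ c ∈ corners J u ∪ corners J v,
      ((if c ∈ corners J u then Real.sqrt k else 0)
        - (if c ∈ corners J v then Real.sqrt k else 0)) ^ 2
      ≤ 2 * 2 ^ J * k := by
  set A := corners J u
  set B := corners J v
  set f : Vertex → ℝ := fun c =>
    ((if c ∈ A then Real.sqrt k else 0) - (if c ∈ B then Real.sqrt k else 0)) ^ 2 with hf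
  have hsub : (A \ B) ∪ (B \ A) ⊆ A ∪ B := by
    intro x hx
    simp only [Finset.mem_union, Finset.mem_sdiff] at hx ⊢
    tauto
  have hzero : ∀ c ∈ A ∪ B, c ∉ (A \ B) ∪ (B \ A) → f c = 0 := by
    intro c hc hnc
    simp only [Finset.mem_union, Finset.mem_sdiff] at hc hnc
    push_neg at hnc
    rw [hf]
    have hAB : c ∈ A ∧ c ∈ B := by tauto
    simp [hAB.1, hAB.2]
  rw [← Finset.sum_subset hsub hzero]
  have hfk : ∀ c, f c ≤ (k : ℝ) := by
    intro c
    simp only [hf]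
    have hs : Real.sqrt k ^ 2 = (k : ℝ) := Real.sq_sqrt (Nat.cast_nonneg k)
    split_ifs <;>
      simp only [sub_zero, zero_sub, sub_self, even_two, Even.neg_pow] <;>
      first
        | (rw [hs])
        | (rw [zero_pow (by norm_num : (2:ℕ) ≠ 0)]; exact Nat.cast_nonneg k)
  refine le_trans (Finset.sum_le_sum (fun c _ => hfk c)) ?_
  rw [Finset.sum_const, nsmul_eq_mul]
  have hcard : (((A \ B) ∪ (B \ A)).card : ℝ) ≤ 2 * 2 ^ J := by
    have h1 : (A \ B).card ≤ 2 ^ J := st6_card_corners_sdiff (J := J) h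
    have h2 : (B \ A).card ≤ 2 ^ J := st6_card_corners_sdiff (J := J) (st6_adj_symm h)
    have h3 := Finset.card_union_le (A \ B) (B \ A)
    have : ((A \ B) ∪ (B \ A)).card ≤ 2 ^ J + 2 ^ J := by omega
    calc (((A \ B) ∪ (B \ A)).card : ℝ) ≤ ((2 ^ J + 2 ^ J : ℕ) : ℝ) := by exact_mod_cast this
      _ = 2 * 2 ^ J := by push_cast; ring
  have hk0 : (0 : ℝ) ≤ k := Nat.cast_nonneg k
  nlinarith [hcard]

lemma st6_level_tail {Ω : Type} [MeasureSpace Ω] [IsProbabilityMeasure (ℙ : Measure Ω)]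
    (b : ℕ × Vertex → Ω → ℝ) (hb : GaussianSetup b) {k : ℕ} (hk : 1 ≤ k)
    (j : ℕ) {u v : Vertex} (huv : adj u v) {ε : ℝ} (hε : 0 ≤ ε) :
    ℙ {ω | ε ≤ |psi b k j u ω - psi b k j v ω|}
      ≤ ENNReal.ofReal
          (2 * Real.exp (-ε ^ 2 / (2 * (2 * k * ((2 : ℝ) ^ (j * k))⁻¹)))) := by
  set J := j * k with hJ
  set A := corners J u with hA
  set B := corners J v with hB
  set a : ℕ × Vertex → ℝ := fun i =>
    (if i.2 ∈ A then Real.sqrt k else 0) - (if i.2 ∈ B then Real.sqrt k else 0) with ha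
  set s : Finset (ℕ × Vertex) := (A ∪ B).image (fun c => (J, c)) with hs
  have hinj : ∀ c ∈ A ∪ B, ∀ c' ∈ A ∪ B,
      (fun c => ((J, c) : ℕ × Vertex)) c = (fun c => ((J, c) : ℕ × Vertex)) c' → c = c' :=
    fun c _ c' _ hcc => ((Prod.mk.injEq _ _ _ _).mp hcc).2
  have hsum_eq : ∀ ω, ∑ i ∈ s, a i * b i ω = psi b k j u ω - psi b k j v ω := by
    intro ω
    rw [hs, Finset.sum_image hinj]
    have hterm : ∀ c ∈ A ∪ B, a (J, c) * b (J, c) ω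
        = (if c ∈ A then Real.sqrt k * b (J, c) ω else 0)
          - (if c ∈ B then Real.sqrt k * b (J, c) ω else 0) := by
      intro c _
      simp only [ha]
      split_ifs <;> ring
    rw [Finset.sum_congr rfl hterm, Finset.sum_sub_distrib,
        Finset.sum_ite_mem, Finset.sum_ite_mem,
        Finset.union_inter_cancel_left, Finset.union_inter_cancel_right]
    simp only [psi, ← hJ, ← hA, ← hB]
  have hvar : ∑ i ∈ s, a i ^ 2 * ((2 : ℝ) ^ (2 * i.1))⁻¹
      ≤ 2 * k * ((2 : ℝ) ^ J)⁻¹ := by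
    rw [hs, Finset.sum_image hinj]
    have h1 : ∑ c ∈ A ∪ B, a (J, c) ^ 2 * ((2 : ℝ) ^ (2 * J))⁻¹
        = (∑ c ∈ A ∪ B, a (J, c) ^ 2) * ((2 : ℝ) ^ (2 * J))⁻¹ :=
      (Finset.sum_mul _ _ _).symm
    rw [h1]
    have h2 := st6_sum_sq_coef (J := J) huv k
    rw [← hA, ← hB] at h2
    have h4 : (0 : ℝ) ≤ ((2 : ℝ) ^ (2 * J))⁻¹ := by positivity
    calc (∑ c ∈ A ∪ B, a (J, c) ^ 2) * ((2 : ℝ) ^ (2 * J))⁻¹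
        ≤ (2 * 2 ^ J * k) * ((2 : ℝ) ^ (2 * J))⁻¹ := by
          refine mul_le_mul_of_nonneg_right ?_ h4
          refine le_trans (le_of_eq (Finset.sum_congr rfl fun c _ => ?_)) h2
          simp only [ha]
      _ = 2 * k * ((2 : ℝ) ^ J)⁻¹ := by
          rw [two_mul J, pow_add]
          have hne : ((2 : ℝ) ^ J) ≠ 0 := by positivity
          field_simp
  have hVpos : (0 : ℝ) < 2 * k * ((2 : ℝ) ^ J)⁻¹ := by
    have hkpos : (0 : ℝ) < (k : ℝ) := by exact_mod_cast hk
    positivity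
  have htail := st6_sum_gaussian_tail b hb a s hvar hVpos hε
  refine le_trans (le_of_eq ?_) htail
  congr 1
  ext ω
  simp only [Set.mem_setOf_eq, hsum_eq ω]

lemma st6_card_vbox (N : ℕ) : (vbox N).card = N ^ 2 := by
  unfold vbox boxAt rectAt
  rw [Finset.card_Icc_prod]
  simp only [Int.card_Icc]
  have h1 : ((0 : ℤ) + (N : ℤ) - 1 + 1 - 0).toNat = N := by omega
  simp only [h1]
  ring

/-- **Lemma 2.3, second part (continuity estimate).** For all large n, with probability at
least 1 - e^{-n/10}, |φ_{N,u} - φ_{N,v}| ≤ 100 √(K log N) for all nearest neighbors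
u, v ∈ V_N. -/
theorem statement6 {Ω : Type} [MeasureSpace Ω] [IsProbabilityMeasure (ℙ : Measure Ω)]
    (b : ℕ × Vertex → Ω → ℝ) (hb : GaussianSetup b) (k : ℕ) (hk : 1 ≤ k) :
    ∀ᶠ n : ℕ in atTop,
      ℙ {ω | ∀ u ∈ vbox (2 ^ n), ∀ v ∈ vbox (2 ^ n), adj u v →
            |phi b n k u ω - phi b n k v ω| ≤
              100 * Real.sqrt ((2 ^ k : ℝ) * Real.log (2 ^ n))}
        ≥ ENNReal.ofReal (1 - Real.exp (-(n : ℝ) / 10)) := by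
  refine Filter.Eventually.of_forall fun n => ?_
  classical
  set N : ℕ := 2 ^ n with hN
  set m : ℕ := n / k with hm
  set L : ℝ := Real.sqrt ((2 ^ k : ℝ) * Real.log (2 ^ n)) with hL
  set G : Set Ω := {ω | ∀ u ∈ vbox N, ∀ v ∈ vbox N, adj u v →
      |phi b n k u ω - phi b n k v ω| ≤ 100 * L} with hG
  set c : ℝ := Real.sqrt (Real.sqrt (1 / 2)) with hc
  set εf : ℕ → ℝ := fun j => 15 * L * c ^ j with hεf
  set Vf : ℕ → ℝ := fun j => 2 * k * ((2 : ℝ) ^ (j * k))⁻¹ with hVf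
  have hL0 : 0 ≤ L := Real.sqrt_nonneg _
  have hlogpow : Real.log ((2 : ℝ) ^ n) = n * Real.log 2 := by rw [Real.log_pow]
  have hlognn : 0 ≤ Real.log ((2 : ℝ) ^ n) :=
    Real.log_nonneg (one_le_pow₀ (by norm_num))
  have hL2 : L ^ 2 = (2 ^ k : ℝ) * ((n : ℝ) * Real.log 2) := by
    rw [hL, Real.sq_sqrt (mul_nonneg (by positivity) hlognn), hlogpow]
  have hc0 : 0 ≤ c := Real.sqrt_nonneg _
  have hc2 : c ^ 2 = Real.sqrt (1 / 2) := Real.sq_sqrt (Real.sqrt_nonneg _)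
  have hchalf : (1 / 2 : ℝ) ≤ c ^ 2 := by
    rw [hc2]
    nlinarith [Real.sq_sqrt (show (0 : ℝ) ≤ 1 / 2 by norm_num), Real.sqrt_nonneg (1 / 2 : ℝ)]
  have hc4 : c ^ 4 = 1 / 2 := by
    have h' : c ^ 4 = (c ^ 2) ^ 2 := by ring
    rw [h', hc2, Real.sq_sqrt (by norm_num : (0 : ℝ) ≤ 1 / 2)]
  have hcle : c ≤ 17 / 20 := by
    refine le_of_pow_le_pow_left₀ (n := 4) (by norm_num) (by norm_num) ?_
    rw [hc4]; norm_num
  have hgeom : ∑ j ∈ Finset.range m, c ^ j ≤ 20 / 3 := by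
    have h1 : ∑ j ∈ Finset.range m, c ^ j ≤ ∑ j ∈ Finset.range m, (17 / 20 : ℝ) ^ j :=
      Finset.sum_le_sum fun j _ => pow_le_pow_left₀ hc0 hcle j
    have h2 : ∑ j ∈ Finset.range m, (17 / 20 : ℝ) ^ j
        = ((17 / 20 : ℝ) ^ m - 1) / (17 / 20 - 1) := geom_sum_eq (by norm_num) m
    have h3 : (0 : ℝ) ≤ (17 / 20 : ℝ) ^ m := by positivity
    have h4 : (17 / 20 : ℝ) ^ m ≤ 1 := pow_le_one₀ (by norm_num) (by norm_num)
    refine h1.trans ?_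
    rw [h2, show ((17 / 20 : ℝ) ^ m - 1) / (17 / 20 - 1)
        = (1 - (17 / 20 : ℝ) ^ m) * (20 / 3) by ring]
    nlinarith
  have hεnn : ∀ j, 0 ≤ εf j := by
    intro j
    simp only [hεf]
    exact mul_nonneg (mul_nonneg (by norm_num) hL0) (pow_nonneg hc0 j)
  have hsumε : ∑ j ∈ Finset.range m, εf j ≤ 100 * L := by
    simp only [hεf]
    rw [← Finset.mul_sum]
    calc (15 * L) * ∑ j ∈ Finset.range m, c ^ j
        ≤ (15 * L) * (20 / 3) :=
          mul_le_mul_of_nonneg_left hgeom (mul_nonneg (by norm_num) hL0)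
      _ = 100 * L := by ring
  have hkpos : (0 : ℝ) < (k : ℝ) := by exact_mod_cast hk
  have hVpos : ∀ j, 0 < Vf j := by
    intro j; simp only [hVf]; positivity
  have hexp : ∀ j, -εf j ^ 2 / (2 * Vf j) ≤ -(6 * (n : ℝ)) := by
    intro j
    have hp : (0 : ℝ) < (2 : ℝ) ^ (j * k) := by positivity
    have hq0 : (0 : ℝ) ≤ (c ^ j) ^ 2 := sq_nonneg _
    have h2k : (2 : ℝ) ≤ (2 : ℝ) ^ k := by
      calc (2 : ℝ) = 2 ^ 1 := (pow_one 2).symm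
        _ ≤ 2 ^ k := pow_le_pow_right₀ one_le_two hk
    have hpow1 : (1 : ℝ) ≤ (c ^ j) ^ 2 * (2 : ℝ) ^ (j * k) := by
      have e1 : (c ^ j) ^ 2 * (2 : ℝ) ^ (j * k) = (c ^ 2 * 2 ^ k) ^ j := by
        rw [pow_right_comm, pow_mul', ← mul_pow]
      rw [e1]
      refine one_le_pow₀ ?_
      nlinarith
    have hinv : ((2 : ℝ) ^ (j * k))⁻¹ ≤ (c ^ j) ^ 2 := by
      have h' := mul_le_mul_of_nonneg_right hpow1 (inv_nonneg.2 hp.le)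
      rw [one_mul, mul_assoc, mul_inv_cancel₀ hp.ne', mul_one] at h'
      exact h'
    have hkle : (k : ℝ) ≤ (2 : ℝ) ^ k := by
      have := (Nat.lt_two_pow_self (n := k)).le
      exact_mod_cast this
    have hklog : 24 * (k : ℝ) ≤ 225 * ((2 : ℝ) ^ k * Real.log 2) := by
      have hlog2 := Real.log_two_gt_d9
      have h1 : (k : ℝ) * 0.6931471803 ≤ (2 : ℝ) ^ k * Real.log 2 :=
        mul_le_mul hkle (le_of_lt hlog2) (by norm_num) (by positivity)
      have h2 : (0 : ℝ) ≤ (k : ℝ) := Nat.cast_nonneg k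
      linarith
    have e2 : εf j ^ 2 = 225 * ((2 : ℝ) ^ k * ((n : ℝ) * Real.log 2)) * (c ^ j) ^ 2 := by
      simp only [hεf]
      rw [mul_pow, mul_pow, hL2]
      ring
    have step1 : 12 * (n : ℝ) * Vf j ≤ 24 * (n : ℝ) * (k : ℝ) * (c ^ j) ^ 2 := by
      simp only [hVf]
      have h' := mul_le_mul_of_nonneg_left hinv
        (by positivity : (0 : ℝ) ≤ 24 * (n : ℝ) * (k : ℝ))
      linarith [h']
    have step2 : 24 * (n : ℝ) * (k : ℝ) * (c ^ j) ^ 2 ≤ εf j ^ 2 := by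
      rw [e2]
      have hq := mul_le_mul_of_nonneg_right hklog
        (mul_nonneg (Nat.cast_nonneg n : (0 : ℝ) ≤ (n : ℝ)) hq0)
      calc 24 * (n : ℝ) * (k : ℝ) * (c ^ j) ^ 2
          = 24 * (k : ℝ) * ((n : ℝ) * (c ^ j) ^ 2) := by ring
        _ ≤ 225 * ((2 : ℝ) ^ k * Real.log 2) * ((n : ℝ) * (c ^ j) ^ 2) := hq
        _ = 225 * ((2 : ℝ) ^ k * ((n : ℝ) * Real.log 2)) * (c ^ j) ^ 2 := by ring
    have key : 12 * (n : ℝ) * Vf j ≤ εf j ^ 2 := step1.trans step2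
    have h2V : (0 : ℝ) < 2 * Vf j := by linarith [hVpos j]
    rw [neg_div, neg_le_neg_iff, le_div_iff₀ h2V]
    linarith
  set E : (Vertex × Vertex) × ℕ → Set Ω := fun x =>
    {ω | adj x.1.1 x.1.2 ∧ εf x.2 ≤ |psi b k x.2 x.1.1 ω - psi b k x.2 x.1.2 ω|} with hE
  set S : Finset ((Vertex × Vertex) × ℕ) := (vbox N ×ˢ vbox N) ×ˢ Finset.range m with hS
  have hGc : Gᶜ ⊆ ⋃ x ∈ S, E x := by
    intro ω hω
    simp only [hG, Set.mem_compl_iff, Set.mem_setOf_eq] at hω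
    push_neg at hω
    obtain ⟨u, hu, v, hv, hadj, hgt⟩ := hω
    have hkey : ∃ j ∈ Finset.range m, εf j ≤ |psi b k j u ω - psi b k j v ω| := by
      by_contra hcon
      push_neg at hcon
      have hphi : phi b n k u ω - phi b n k v ω
          = ∑ j ∈ Finset.range m, (psi b k j u ω - psi b k j v ω) := by
        unfold phi
        rw [← hm, ← Finset.sum_sub_distrib]
      have hbd : |phi b n k u ω - phi b n k v ω| ≤ ∑ j ∈ Finset.range m, εf j := by
        rw [hphi]
        refine le_trans (Finset.abs_sum_le_sum_abs _ _)
          (Finset.sum_le_sum fun j hj => (hcon j hj).le)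
      have := hbd.trans hsumε
      linarith
    obtain ⟨j, hj, hDj⟩ := hkey
    refine Set.mem_biUnion (show (((u, v), j) : (Vertex × Vertex) × ℕ) ∈ S from ?_) ?_
    · simp only [hS, Finset.mem_product, Finset.mem_range] at hj ⊢
      exact ⟨⟨hu, hv⟩, hj⟩
    · simp only [hE, Set.mem_setOf_eq]
      exact ⟨hadj, hDj⟩
  have hEbound : ∀ x ∈ S, ℙ (E x) ≤ ENNReal.ofReal (2 * Real.exp (-(6 * (n : ℝ)))) := by
    intro x _
    by_cases hadj : adj x.1.1 x.1.2
    · have hsub : E x ⊆ {ω | εf x.2 ≤ |psi b k x.2 x.1.1 ω - psi b k x.2 x.1.2 ω|} :=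
        fun ω hω => hω.2
      refine le_trans (measure_mono hsub) ?_
      refine le_trans (st6_level_tail b hb hk x.2 hadj (hεnn x.2)) ?_
      refine ENNReal.ofReal_le_ofReal ?_
      have h1 := hexp x.2
      have h2 : Real.exp (-εf x.2 ^ 2 / (2 * (2 * (k : ℝ) * ((2 : ℝ) ^ (x.2 * k))⁻¹)))
          ≤ Real.exp (-(6 * (n : ℝ))) := by
        refine Real.exp_le_exp.2 ?_
        simpa [hVf] using h1
      linarith
    · have hempty : E x = ∅ := by
        ext ω; simp [hE, hadj]
      rw [hempty]
      simp
  have hGcb : ℙ Gᶜ ≤ ENNReal.ofReal (Real.exp (-(n : ℝ) / 10)) := by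
    refine le_trans (measure_mono hGc) ?_
    refine le_trans (measure_biUnion_finset_le S E) ?_
    refine le_trans (Finset.sum_le_sum hEbound) ?_
    rw [Finset.sum_const, nsmul_eq_mul]
    rw [show ((S.card : ℕ) : ℝ≥0∞) = ENNReal.ofReal ((S.card : ℕ) : ℝ) from
      (ENNReal.ofReal_natCast _).symm]
    rw [← ENNReal.ofReal_mul (Nat.cast_nonneg _)]
    refine ENNReal.ofReal_le_ofReal ?_
    have hcardS : S.card = N ^ 2 * N ^ 2 * m := by
      simp only [hS]
      rw [Finset.card_product, Finset.card_product, st6_card_vbox, Finset.card_range]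
    have hm_le : (m : ℝ) ≤ (n : ℝ) := by exact_mod_cast Nat.div_le_self n k
    have hm0 : (0 : ℝ) ≤ (m : ℝ) := Nat.cast_nonneg m
    have hcards : (S.card : ℝ) = (((N : ℝ) ^ 2) ^ 2) * (m : ℝ) := by
      rw [hcardS]; push_cast; ring
    have h2M : ∀ M : ℕ, (2 : ℝ) ^ M = Real.exp ((M : ℝ) * Real.log 2) := by
      intro M
      rw [show (2 : ℝ) = Real.exp (Real.log 2) from (Real.exp_log (by norm_num)).symm]
      rw [← Real.exp_nat_mul, Real.exp_log (by norm_num)]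
    have hpow4 : (((N : ℝ) ^ 2) ^ 2) = Real.exp ((4 * n : ℝ) * Real.log 2) := by
      have hNr : (N : ℝ) = (2 : ℝ) ^ n := by rw [hN]; push_cast; ring
      rw [hNr, ← pow_mul, ← pow_mul, h2M]
      congr 1
      push_cast
      ring
    have h2m : 2 * (m : ℝ) ≤ Real.exp (2 * (n : ℝ)) := by
      have h' := Real.add_one_le_exp (2 * (n : ℝ))
      linarith
    have hA1 : (S.card : ℝ) * 2 ≤ Real.exp ((4 * n : ℝ) * Real.log 2) * Real.exp (2 * (n : ℝ)) := by
      rw [hcards, hpow4]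
      calc Real.exp ((4 * n : ℝ) * Real.log 2) * (m : ℝ) * 2
          = Real.exp ((4 * n : ℝ) * Real.log 2) * (2 * (m : ℝ)) := by ring
        _ ≤ Real.exp ((4 * n : ℝ) * Real.log 2) * Real.exp (2 * (n : ℝ)) :=
            mul_le_mul_of_nonneg_left h2m (Real.exp_nonneg _)
    have hexpineq : (4 * n : ℝ) * Real.log 2 + 2 * (n : ℝ) + -(6 * (n : ℝ)) ≤ -(n : ℝ) / 10 := by
      have hlog2 := Real.log_two_lt_d9
      have hn0 : (0 : ℝ) ≤ (n : ℝ) := Nat.cast_nonneg n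
      have h1 : (n : ℝ) * Real.log 2 ≤ (n : ℝ) * 0.6931471808 :=
        mul_le_mul_of_nonneg_left (le_of_lt hlog2) hn0
      linarith
    calc (S.card : ℝ) * (2 * Real.exp (-(6 * (n : ℝ))))
        = ((S.card : ℝ) * 2) * Real.exp (-(6 * (n : ℝ))) := by ring
      _ ≤ (Real.exp ((4 * n : ℝ) * Real.log 2) * Real.exp (2 * (n : ℝ)))
            * Real.exp (-(6 * (n : ℝ))) :=
          mul_le_mul_of_nonneg_right hA1 (Real.exp_nonneg _)
      _ = Real.exp ((4 * n : ℝ) * Real.log 2 + 2 * (n : ℝ) + -(6 * (n : ℝ))) := by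
          rw [← Real.exp_add, ← Real.exp_add]
      _ ≤ Real.exp (-(n : ℝ) / 10) := Real.exp_le_exp.2 hexpineq
  have huniv : (1 : ℝ≥0∞) ≤ ℙ G + ℙ Gᶜ := by
    have h' := measure_union_le (μ := ℙ) G Gᶜ
    rw [Set.union_compl_self] at h'
    simpa using h'
  have hfin : ENNReal.ofReal (1 - Real.exp (-(n : ℝ) / 10)) ≤ ℙ G := by
    rw [ENNReal.ofReal_sub _ (Real.exp_pos _).le, ENNReal.ofReal_one]
    refine tsub_le_iff_right.mpr ?_
    calc (1 : ℝ≥0∞) ≤ ℙ G + ℙ Gᶜ := huniv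
      _ ≤ ℙ G + ENNReal.ofReal (Real.exp (-(n : ℝ) / 10)) := add_le_add_right hGcb _
  exact hfin


end
end

section
/- There exists a universal constant C such that for every k ≥ 1, every j ≥ 0, and every box B ∈ 𝓑_{jk}: E[ max_{z ∈ B ∩ ℤ²} ψ_{j,z} ] ≤ C √k. -/
open MeasureTheory ProbabilityTheory Real Filter
open scoped NNReal ENNReal Classical

noncomputable section

section Aux

lemma pdf_mul_exp (v : ℝ≥0) (hv : v ≠ 0) (t x : ℝ) :
    gaussianPDFReal 0 v x * rexp (t * x) =
      rexp (t ^ 2 * v / 2) * gaussianPDFReal (t * v) v x := by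
  have hv' : (v : ℝ) ≠ 0 := by exact_mod_cast hv
  simp only [gaussianPDFReal]
  have h : rexp (-(x - 0) ^ 2 / (2 * v) + t * x)
      = rexp (t ^ 2 * v / 2) * rexp (-(x - t * v) ^ 2 / (2 * v)) := by
    rw [← Real.exp_add]; congr 1; field_simp; ring
  rw [mul_assoc, ← Real.exp_add, h]; ring

lemma smul_pdf_eq (v : ℝ≥0) (hv : v ≠ 0) (t : ℝ) :
    (fun x => ((gaussianPDFReal 0 v x).toNNReal : ℝ≥0) • rexp (t * x)) =
      fun x => rexp (t ^ 2 * v / 2) * gaussianPDFReal (t * v) v x := by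
  funext x
  rw [NNReal.smul_def, Real.coe_toNNReal _ (gaussianPDFReal_nonneg 0 v x), smul_eq_mul]
  exact pdf_mul_exp v hv t x

lemma integrable_exp_gaussianReal (v : ℝ≥0) (t : ℝ) :
    Integrable (fun x => rexp (t * x)) (gaussianReal 0 v) := by
  by_cases hv : v = 0
  · subst hv
    rw [gaussianReal_zero_var]
    have h : (fun x => rexp (t * x)) =ᵐ[Measure.dirac (0 : ℝ)] fun _ => rexp (t * 0) := by
      rw [MeasureTheory.ae_dirac_eq]; exact Filter.eventually_pure.2 rfl
    exact (integrable_const _).congr h.symm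
  · rw [gaussianReal_of_var_ne_zero _ hv]
    have hmeas : Measurable fun x => (gaussianPDFReal 0 v x).toNNReal :=
      (measurable_gaussianPDFReal 0 v).real_toNNReal
    have h0 : (gaussianPDF 0 v) = fun x => ((gaussianPDFReal 0 v x).toNNReal : ℝ≥0∞) := rfl
    rw [h0, integrable_withDensity_iff_integrable_smul hmeas, smul_pdf_eq v hv t]
    exact (integrable_gaussianPDFReal (t * v) v).const_mul _

lemma integral_exp_gaussianReal (v : ℝ≥0) (t : ℝ) :
    ∫ x, rexp (t * x) ∂(gaussianReal 0 v) = rexp (t ^ 2 * v / 2) := by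
  by_cases hv : v = 0
  · subst hv
    rw [gaussianReal_zero_var, integral_dirac]
    norm_num
  · rw [gaussianReal_of_var_ne_zero _ hv]
    have hmeas : Measurable fun x => (gaussianPDFReal 0 v x).toNNReal :=
      (measurable_gaussianPDFReal 0 v).real_toNNReal
    have h0 : (gaussianPDF 0 v) = fun x => ((gaussianPDFReal 0 v x).toNNReal : ℝ≥0∞) := rfl
    rw [h0, integral_withDensity_eq_integral_smul hmeas]
    rw [show (fun x => ((gaussianPDFReal 0 v x).toNNReal : ℝ≥0) • rexp (t * x)) =
      fun x => rexp (t ^ 2 * v / 2) * gaussianPDFReal (t * v) v x from smul_pdf_eq v hv t]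
    rw [integral_const_mul, integral_gaussianPDFReal_eq_one _ hv, mul_one]

lemma max_le_exp_div (lam y : ℝ) (hlam : 0 < lam) : max y 0 ≤ rexp (lam * y) / lam := by
  rcases le_or_gt y 0 with h | h
  · rw [max_eq_right h]
    positivity
  · rw [max_eq_left h.le]
    rw [le_div_iff₀ hlam, mul_comm]
    calc lam * y ≤ lam * y + 1 := by linarith
    _ ≤ rexp (lam * y) := Real.add_one_le_exp _

lemma abs_le_exp_add_exp (lam y : ℝ) (hlam : 0 < lam) :
    |y| ≤ (rexp (lam * y) + rexp (-lam * y)) / lam := by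
  rcases le_or_gt y 0 with h | h
  · rw [abs_of_nonpos h, le_div_iff₀ hlam, mul_comm]
    have := Real.add_one_le_exp (-lam * y)
    nlinarith [Real.exp_pos (lam * y)]
  · rw [abs_of_pos h, le_div_iff₀ hlam, mul_comm]
    have := Real.add_one_le_exp (lam * y)
    nlinarith [Real.exp_pos (-lam * y)]

set_option maxHeartbeats 1000000 in
theorem emax_bound {Ω : Type} [MeasureSpace Ω] [IsProbabilityMeasure (ℙ : Measure Ω)]
    {ι : Type} (s : Finset ι) (hs : s.Nonempty) (X : ι → Ω → ℝ)
    (hmeas : ∀ i, Measurable (X i)) (σ : ℝ) (hσ : 0 < σ)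
    (hmgf : ∀ t : ℝ, ∀ i ∈ s, Integrable (fun ω => rexp (t * X i ω)) ℙ ∧
      ∫ ω, rexp (t * X i ω) ∂ℙ ≤ rexp (t ^ 2 * σ ^ 2 / 2)) :
    Integrable (fun ω => s.sup' hs (fun i => X i ω)) ℙ ∧
    (∫ ω, s.sup' hs (fun i => X i ω) ∂ℙ) ≤ 3 * σ * Real.sqrt (Real.log (s.card + 1)) := by
  have hM1 : (1 : ℝ) ≤ s.card := by exact_mod_cast hs.card_pos
  set M : ℝ := (s.card : ℝ) with hM
  set lg : ℝ := Real.log (M + 1) with hlg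
  have hlog2 : Real.log 2 ≤ lg := Real.log_le_log (by norm_num) (by linarith)
  have hlg0 : 0 < lg := lt_of_lt_of_le (Real.log_pos (by norm_num)) hlog2
  set lam : ℝ := Real.sqrt (2 * lg) / σ with hlam_def
  have hlam : 0 < lam := div_pos (Real.sqrt_pos.2 (by linarith)) hσ
  set α : ℝ := lam * σ ^ 2 with hα
  have hlam_sq : lam ^ 2 * σ ^ 2 = 2 * lg := by
    rw [hlam_def, div_pow, Real.sq_sqrt (by linarith : (0:ℝ) ≤ 2 * lg)]
    field_simp
  have hlamα : lam * α = 2 * lg := by rw [hα]; nlinarith [hlam_sq]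
  -- the per-index positive-part functions
  set g : ι → Ω → ℝ := fun i ω => max (X i ω - α) 0 with hg
  have hgmeas : ∀ i, Measurable (g i) := fun i =>
    ((hmeas i).sub measurable_const).max measurable_const
  have hgbound : ∀ i ω, g i ω ≤ rexp (-(lam * α)) / lam * rexp (lam * X i ω) := by
    intro i ω
    have := max_le_exp_div lam (X i ω - α) hlam
    calc g i ω ≤ rexp (lam * (X i ω - α)) / lam := this
    _ = rexp (-(lam * α)) / lam * rexp (lam * X i ω) := by
        rw [show lam * (X i ω - α) = -(lam * α) + lam * X i ω by ring, Real.exp_add]; ring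
  have hgint : ∀ i ∈ s, Integrable (g i) ℙ := by
    intro i hi
    refine Integrable.mono' (((hmgf lam i hi).1).const_mul (rexp (-(lam * α)) / lam))
      (hgmeas i).aestronglyMeasurable (Filter.Eventually.of_forall fun ω => ?_)
    rw [Real.norm_eq_abs, abs_of_nonneg (le_max_right _ _)]
    exact hgbound i ω
  have hgval : ∀ i ∈ s, ∫ ω, g i ω ∂ℙ ≤ 1 / ((M + 1) * lam) := by
    intro i hi
    have h1 : ∫ ω, g i ω ∂ℙ ≤ ∫ ω, rexp (-(lam * α)) / lam * rexp (lam * X i ω) ∂ℙ :=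
      integral_mono (hgint i hi) (((hmgf lam i hi).1).const_mul _)
        (fun ω => hgbound i ω)
    rw [integral_const_mul] at h1
    have h2 : ∫ ω, rexp (lam * X i ω) ∂ℙ ≤ rexp (lam ^ 2 * σ ^ 2 / 2) := (hmgf lam i hi).2
    have h3 : rexp (-(lam * α)) / lam * ∫ ω, rexp (lam * X i ω) ∂ℙ
        ≤ rexp (-(lam * α)) / lam * rexp (lam ^ 2 * σ ^ 2 / 2) := by
      apply mul_le_mul_of_nonneg_left h2; positivity
    have h4 : rexp (-(lam * α)) / lam * rexp (lam ^ 2 * σ ^ 2 / 2) = 1 / ((M + 1) * lam) := by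
      have e1 : rexp (-(lam * α)) * rexp (lam ^ 2 * σ ^ 2 / 2) = rexp (-lg) := by
        rw [← Real.exp_add, hlamα, hlam_sq]; congr 1; ring
      have e2 : rexp (-lg) = (M + 1)⁻¹ := by
        rw [Real.exp_neg, hlg, Real.exp_log (by linarith)]
      rw [div_mul_eq_mul_div, e1, e2, one_div, mul_inv, div_eq_mul_inv]
    linarith
  -- the dominating function
  set G : Ω → ℝ := fun ω => α + ∑ i ∈ s, g i ω with hG
  have hGint : Integrable G ℙ := (integrable_const α).add (integrable_finset_sum s hgint)
  have hsup_le : ∀ ω, s.sup' hs (fun i => X i ω) ≤ G ω := by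
    intro ω
    refine Finset.sup'_le hs _ fun i hi => ?_
    have h1 : X i ω - α ≤ g i ω := le_max_left _ _
    have h2 : g i ω ≤ ∑ i' ∈ s, g i' ω :=
      Finset.single_le_sum (f := fun i' => g i' ω) (fun i' _ => le_max_right _ _) hi
    rw [hG]; dsimp only; linarith
  obtain ⟨i0, hi0⟩ := id hs
  have hXi0int : Integrable (X i0) ℙ := by
    refine Integrable.mono' ((((hmgf lam i0 hi0).1).add ((hmgf (-lam) i0 hi0).1)).const_mul
      (1 / lam)) (hmeas i0).aestronglyMeasurable (Filter.Eventually.of_forall fun ω => ?_)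
    rw [Real.norm_eq_abs]
    have := abs_le_exp_add_exp lam (X i0 ω) hlam
    rw [div_eq_mul_inv, mul_comm] at this
    calc |X i0 ω| ≤ lam⁻¹ * (rexp (lam * X i0 ω) + rexp (-lam * X i0 ω)) := this
    _ = 1 / lam * ((fun ω => rexp (lam * X i0 ω)) ω + (fun ω => rexp (-lam * X i0 ω)) ω) := by
        rw [one_div]
    _ ≤ _ := le_refl _
  have hXle : ∀ ω, X i0 ω ≤ s.sup' hs (fun i => X i ω) := fun ω => Finset.le_sup' (f := fun i => X i ω) hi0
  have hsupmeas : Measurable (fun ω => s.sup' hs (fun i => X i ω)) := by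
    have := Finset.measurable_sup' hs (fun i (_ : i ∈ s) => hmeas i)
    convert this using 1
    funext ω
    exact (Finset.sup'_apply hs X ω).symm
  have hsupint : Integrable (fun ω => s.sup' hs (fun i => X i ω)) ℙ := by
    refine Integrable.mono' (hXi0int.abs.add hGint.abs) hsupmeas.aestronglyMeasurable
      (Filter.Eventually.of_forall fun ω => ?_)
    rw [Real.norm_eq_abs, abs_le]
    constructor
    · have h1 : -(|X i0 ω| + |G ω|) ≤ X i0 ω := by
        have := abs_nonneg (G ω); have := neg_abs_le (X i0 ω); linarith
      exact le_trans h1 (hXle ω)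
    · have h2 : G ω ≤ |X i0 ω| + |G ω| := by
        have := abs_nonneg (X i0 ω); have := le_abs_self (G ω); linarith
      exact le_trans (hsup_le ω) h2
  have hint_le : ∫ ω, s.sup' hs (fun i => X i ω) ∂ℙ ≤ ∫ ω, G ω ∂ℙ :=
    integral_mono hsupint hGint hsup_le
  have hGval : ∫ ω, G ω ∂ℙ ≤ α + 1 / lam := by
    rw [hG]
    rw [integral_add (integrable_const α) (integrable_finset_sum s hgint)]
    rw [integral_const]
    simp only [probReal_univ, smul_eq_mul, one_mul]
    rw [integral_finset_sum s hgint]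
    have h1 : ∑ i ∈ s, ∫ ω, g i ω ∂ℙ ≤ ∑ _i ∈ s, 1 / ((M + 1) * lam) :=
      Finset.sum_le_sum hgval
    rw [Finset.sum_const, nsmul_eq_mul] at h1
    have h2 : M * (1 / ((M + 1) * lam)) ≤ 1 / lam := by
      have heq : M * (1 / ((M + 1) * lam)) = M / (M + 1) * (1 / lam) := by
        rw [one_div ((M + 1) * lam), mul_inv, div_eq_mul_inv, one_div lam]; ring
      have hMlt : M / (M + 1) ≤ 1 := by
        rw [div_le_one (by linarith)]; linarith
      rw [heq]
      calc M / (M + 1) * (1 / lam) ≤ 1 * (1 / lam) :=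
        mul_le_mul_of_nonneg_right hMlt (by positivity)
      _ = 1 / lam := one_mul _
    linarith
  -- final numerics
  have hfinal : α + 1 / lam ≤ 3 * σ * Real.sqrt lg := by
    have hsqrt2 : Real.sqrt (2 * lg) = Real.sqrt 2 * Real.sqrt lg := Real.sqrt_mul (by norm_num) _
    have hαval : α = σ * (Real.sqrt 2 * Real.sqrt lg) := by
      rw [hα, hlam_def, hsqrt2]
      field_simp
    have hinv : 1 / lam = σ / (Real.sqrt 2 * Real.sqrt lg) := by
      rw [hlam_def, hsqrt2]
      field_simp
    have hslg : Real.sqrt lg > 0 := Real.sqrt_pos.2 hlg0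
    have hs2 : Real.sqrt 2 > 1.414 := by
      nlinarith [Real.sq_sqrt (by norm_num : (0:ℝ) ≤ 2), Real.sqrt_nonneg 2]
    have hlog2' : Real.log 2 > 0.693 := by
      have := Real.log_two_gt_d9; linarith
    -- 1/sqrt lg ≤ sqrt lg / log 2
    have hkey : σ / (Real.sqrt 2 * Real.sqrt lg) ≤ σ * Real.sqrt lg / (Real.sqrt 2 * Real.log 2) := by
      rw [div_le_div_iff₀ (by positivity) (by positivity)]
      have hsq : Real.sqrt lg ^ 2 = lg := Real.sq_sqrt hlg0.le
      have hl2 : Real.log 2 ≤ Real.sqrt lg * Real.sqrt lg := by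
        nlinarith
      nlinarith [Real.sqrt_nonneg 2, hσ.le, mul_nonneg hσ.le (Real.sqrt_nonneg 2)]
    have h3 : σ * (Real.sqrt 2 * Real.sqrt lg) + σ * Real.sqrt lg / (Real.sqrt 2 * Real.log 2)
        ≤ 3 * σ * Real.sqrt lg := by
      have hexpand : σ * Real.sqrt lg / (Real.sqrt 2 * Real.log 2)
          = σ * Real.sqrt lg * (Real.sqrt 2 * Real.log 2)⁻¹ := by ring
      have hbound : (Real.sqrt 2 * Real.log 2)⁻¹ ≤ 1.03 := by
        rw [inv_le_comm₀ (by nlinarith) (by norm_num)]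
        nlinarith
      have hpos : 0 ≤ σ * Real.sqrt lg := by positivity
      calc σ * (Real.sqrt 2 * Real.sqrt lg) + σ * Real.sqrt lg / (Real.sqrt 2 * Real.log 2)
          = σ * Real.sqrt lg * Real.sqrt 2 + σ * Real.sqrt lg * (Real.sqrt 2 * Real.log 2)⁻¹ := by
            ring
      _ ≤ σ * Real.sqrt lg * 1.415 + σ * Real.sqrt lg * 1.03 := by
          have hs2' : Real.sqrt 2 ≤ 1.415 := by
            nlinarith [Real.sq_sqrt (by norm_num : (0:ℝ) ≤ 2), Real.sqrt_nonneg 2]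
          have := mul_le_mul_of_nonneg_left hs2' hpos
          have := mul_le_mul_of_nonneg_left hbound hpos
          linarith
      _ ≤ 3 * σ * Real.sqrt lg := by nlinarith
    rw [hαval, hinv]
    linarith [hkey, h3]
  refine ⟨hsupint, ?_⟩
  calc ∫ ω, s.sup' hs (fun i => X i ω) ∂ℙ ≤ α + 1 / lam := le_trans hint_le hGval
  _ ≤ 3 * σ * Real.sqrt lg := hfinal
  _ = 3 * σ * Real.sqrt (Real.log (s.card + 1)) := rfl


lemma sqrt_pow' (a : ℝ) (ha : 0 ≤ a) (n : ℕ) : Real.sqrt (a ^ n) = Real.sqrt a ^ n := by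
  induction n with
  | zero => simp
  | succ n ih => rw [pow_succ, pow_succ, Real.sqrt_mul (by positivity), ih]

lemma q_sq : Real.sqrt (Real.sqrt 2) ^ 2 = Real.sqrt 2 :=
  Real.sq_sqrt (Real.sqrt_nonneg 2)

lemma q_ge : (7 : ℝ) / 6 ≤ Real.sqrt (Real.sqrt 2) := by
  have h1 : (49 : ℝ) / 36 ≤ Real.sqrt 2 := by
    nlinarith [Real.sq_sqrt (by norm_num : (0:ℝ) ≤ 2), Real.sqrt_nonneg 2]
  nlinarith [Real.sqrt_nonneg (Real.sqrt 2), q_sq]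

lemma r_lt : (Real.sqrt (Real.sqrt 2))⁻¹ ≤ 6 / 7 := by
  have hq := q_ge
  rw [inv_le_comm₀ (by linarith) (by norm_num)]
  linarith

lemma geom_sum_r_le (n : ℕ) : ∑ i ∈ Finset.range n, ((Real.sqrt (Real.sqrt 2))⁻¹) ^ i ≤ 7 := by
  set r : ℝ := (Real.sqrt (Real.sqrt 2))⁻¹ with hr
  have h0 : (0:ℝ) ≤ r := by positivity
  have h1 : r ≤ 6 / 7 := r_lt
  have hgeom := geom_sum_mul r n
  have hrn : (0:ℝ) ≤ r ^ n := by positivity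
  nlinarith [Finset.sum_nonneg (fun i (_ : i ∈ Finset.range n) => pow_nonneg h0 i)]

lemma sq_le_geom_nat (i : ℕ) : (i + 2) ^ 2 ≤ 9 * 2 ^ i := by
  induction i with
  | zero => norm_num
  | succ n ih =>
    rcases Nat.eq_zero_or_pos n with rfl | hn
    · norm_num
    · have h1 : (n + 3) ^ 2 ≤ 2 * (n + 2) ^ 2 := by nlinarith
      calc (n + 1 + 2) ^ 2 = (n + 3) ^ 2 := by ring
      _ ≤ 2 * (n + 2) ^ 2 := h1
      _ ≤ 2 * (9 * 2 ^ n) := by omega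
      _ = 9 * 2 ^ (n + 1) := by ring

lemma nat_le_geom (i : ℕ) : (i : ℝ) + 2 ≤ 3 * Real.sqrt 2 ^ i := by
  have h1 : ((i : ℝ) + 2) ^ 2 ≤ (3 * Real.sqrt 2 ^ i) ^ 2 := by
    have h2 : (3 * Real.sqrt 2 ^ i) ^ 2 = 9 * 2 ^ i := by
      rw [mul_pow, ← pow_mul, mul_comm i 2, pow_mul, Real.sq_sqrt (by norm_num : (0:ℝ) ≤ 2)]
      norm_num
    rw [h2]
    exact_mod_cast sq_le_geom_nat i
  have h3 : (0:ℝ) ≤ (i : ℝ) + 2 := by positivity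
  have h4 : (0:ℝ) ≤ 3 * Real.sqrt 2 ^ i := by positivity
  nlinarith

lemma sqrt_const_le : 3 * Real.sqrt 8 * Real.sqrt 1.4 * Real.sqrt 3 ≤ 18 := by
  have h1 : Real.sqrt 8 * Real.sqrt 1.4 * Real.sqrt 3 = Real.sqrt (8 * 1.4 * 3) := by
    rw [Real.sqrt_mul (by norm_num), Real.sqrt_mul (by norm_num)]
  have h2 : Real.sqrt (8 * 1.4 * 3) ≤ 6 := by
    rw [show (8 * 1.4 * 3 : ℝ) = 33.6 by norm_num]
    calc Real.sqrt 33.6 ≤ Real.sqrt 36 := Real.sqrt_le_sqrt (by norm_num)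
    _ = 6 := by rw [show (36:ℝ) = 6 ^ 2 by norm_num, Real.sqrt_sq (by norm_num)]
  calc 3 * Real.sqrt 8 * Real.sqrt 1.4 * Real.sqrt 3
      = 3 * (Real.sqrt 8 * Real.sqrt 1.4 * Real.sqrt 3) := by ring
  _ ≤ 3 * 6 := by rw [h1]; linarith
  _ = 18 := by norm_num

lemma tau_mul_q : (Real.sqrt 2)⁻¹ * Real.sqrt (Real.sqrt 2) = (Real.sqrt (Real.sqrt 2))⁻¹ := by
  have hq : Real.sqrt (Real.sqrt 2) * Real.sqrt (Real.sqrt 2) = Real.sqrt 2 := by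
    have := q_sq; nlinarith [this]
  have h2 : (0:ℝ) < Real.sqrt 2 := Real.sqrt_pos.2 (by norm_num)
  have hq0 : (0:ℝ) < Real.sqrt (Real.sqrt 2) := Real.sqrt_pos.2 h2
  field_simp
  exact q_sq

lemma level_bound (k : ℕ) (hk : 1 ≤ k) (i M : ℕ) (hM : M ≤ 4 ^ (i + 1)) :
    3 * Real.sqrt (8 * k * (1 / 2) ^ i) * Real.sqrt (Real.log (M + 1))
      ≤ 18 * Real.sqrt k * ((Real.sqrt (Real.sqrt 2))⁻¹) ^ i := by
  set q : ℝ := Real.sqrt (Real.sqrt 2) with hqdef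
  have hq0 : (0:ℝ) < q := Real.sqrt_pos.2 (Real.sqrt_pos.2 (by norm_num))
  have hσ : Real.sqrt (8 * (k:ℝ) * (1 / 2) ^ i)
      = Real.sqrt 8 * Real.sqrt k * ((Real.sqrt 2)⁻¹) ^ i := by
    rw [Real.sqrt_mul (by positivity), Real.sqrt_mul (by norm_num),
      sqrt_pow' _ (by norm_num), one_div, Real.sqrt_inv]
  have hlog : Real.log (M + 1) ≤ 1.4 * ((i:ℝ) + 2) := by
    have hM' : (M : ℝ) ≤ 4 ^ (i + 1) := by exact_mod_cast hM
    have h4 : (4:ℝ) ^ (i + 1) + 1 ≤ 4 ^ (i + 2) := by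
      have he : (4:ℝ) ^ (i + 2) = 4 * 4 ^ (i + 1) := by ring
      have hx : (1:ℝ) ≤ 4 ^ (i + 1) := one_le_pow₀ (by norm_num)

      nlinarith
    have h1 : (M:ℝ) + 1 ≤ 4 ^ (i + 2) := by linarith
    calc Real.log ((M:ℝ) + 1) ≤ Real.log (4 ^ (i + 2)) :=
        Real.log_le_log (by positivity) h1
    _ = ((i:ℝ) + 2) * Real.log 4 := by rw [Real.log_pow]; push_cast; ring
    _ ≤ ((i:ℝ) + 2) * 1.4 := by
        have hl4 : Real.log 4 ≤ 1.4 := by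
          rw [show (4:ℝ) = 2 ^ 2 by norm_num, Real.log_pow]
          have := Real.log_two_lt_d9
          push_cast
          nlinarith
        have hpos : (0:ℝ) ≤ (i:ℝ) + 2 := by positivity
        nlinarith
    _ = 1.4 * ((i:ℝ) + 2) := by ring
  have hslog : Real.sqrt (Real.log (M + 1)) ≤ Real.sqrt 1.4 * (Real.sqrt 3 * q ^ i) := by
    have h1 : Real.sqrt (Real.log (M + 1)) ≤ Real.sqrt (1.4 * ((i:ℝ) + 2)) :=
      Real.sqrt_le_sqrt hlog
    have h2 : Real.sqrt (1.4 * ((i:ℝ) + 2)) = Real.sqrt 1.4 * Real.sqrt ((i:ℝ) + 2) :=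
      Real.sqrt_mul (by norm_num) _
    have h3 : Real.sqrt ((i:ℝ) + 2) ≤ Real.sqrt 3 * q ^ i := by
      have h4 : Real.sqrt ((i:ℝ) + 2) ≤ Real.sqrt (3 * Real.sqrt 2 ^ i) :=
        Real.sqrt_le_sqrt (nat_le_geom i)
      have h5 : Real.sqrt (3 * Real.sqrt 2 ^ i) = Real.sqrt 3 * q ^ i := by
        rw [Real.sqrt_mul (by norm_num), sqrt_pow' _ (Real.sqrt_nonneg 2)]
      linarith [h4, h5.le, h5.ge]
    calc Real.sqrt (Real.log (M + 1)) ≤ Real.sqrt 1.4 * Real.sqrt ((i:ℝ) + 2) := h2 ▸ h1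
    _ ≤ Real.sqrt 1.4 * (Real.sqrt 3 * q ^ i) :=
        mul_le_mul_of_nonneg_left h3 (Real.sqrt_nonneg _)
  have hr : ((Real.sqrt 2)⁻¹) ^ i * q ^ i = (q⁻¹) ^ i := by
    rw [← mul_pow, tau_mul_q]
  calc 3 * Real.sqrt (8 * k * (1 / 2) ^ i) * Real.sqrt (Real.log (M + 1))
      = 3 * (Real.sqrt 8 * Real.sqrt k * ((Real.sqrt 2)⁻¹) ^ i) * Real.sqrt (Real.log (M + 1)) := by
        rw [show ((8 * k * (1 / 2) ^ i : ℝ)) = 8 * (k:ℝ) * (1 / 2) ^ i by push_cast; ring, hσ]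
  _ ≤ 3 * (Real.sqrt 8 * Real.sqrt k * ((Real.sqrt 2)⁻¹) ^ i) * (Real.sqrt 1.4 * (Real.sqrt 3 * q ^ i)) := by
      apply mul_le_mul_of_nonneg_left hslog
      positivity
  _ = (3 * Real.sqrt 8 * Real.sqrt 1.4 * Real.sqrt 3) * Real.sqrt k *
        (((Real.sqrt 2)⁻¹) ^ i * q ^ i) := by ring
  _ = (3 * Real.sqrt 8 * Real.sqrt 1.4 * Real.sqrt 3) * Real.sqrt k * (q⁻¹) ^ i := by rw [hr]
  _ ≤ 18 * Real.sqrt k * (q⁻¹) ^ i := by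
      have hpos : (0:ℝ) ≤ Real.sqrt k * (q⁻¹) ^ i := by positivity
      nlinarith [sqrt_const_le, hpos]


/-- grid projection with spacing 2^T relative to corner c -/
def gpi (c : Vertex) (T : ℕ) (z : Vertex) : Vertex :=
  (c.1 + 2 ^ T * ((z.1 - c.1) / 2 ^ T), c.2 + 2 ^ T * ((z.2 - c.2) / 2 ^ T))

lemma mem_boxAt {c z : Vertex} {L : ℕ} :
    z ∈ boxAt c L ↔ (c.1 ≤ z.1 ∧ c.2 ≤ z.2) ∧ z.1 ≤ c.1 + L - 1 ∧ z.2 ≤ c.2 + L - 1 := by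
  simp [boxAt, rectAt, Finset.mem_Icc, Prod.le_def]

lemma gpi_zero (c z : Vertex) : gpi c 0 z = z := by
  simp [gpi]

lemma sub_gpi_fst (c z : Vertex) (T : ℕ) :
    z.1 - (gpi c T z).1 = (z.1 - c.1) % 2 ^ T := by
  simp only [gpi]
  rw [Int.emod_def]; ring

lemma sub_gpi_snd (c z : Vertex) (T : ℕ) :
    z.2 - (gpi c T z).2 = (z.2 - c.2) % 2 ^ T := by
  simp only [gpi]
  rw [Int.emod_def]; ring

lemma gpi_dist (c z : Vertex) (T : ℕ) :
    (0 ≤ z.1 - (gpi c T z).1 ∧ z.1 - (gpi c T z).1 < 2 ^ T) ∧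
    (0 ≤ z.2 - (gpi c T z).2 ∧ z.2 - (gpi c T z).2 < 2 ^ T) := by
  have hT : (0 : ℤ) < 2 ^ T := by positivity
  rw [sub_gpi_fst, sub_gpi_snd]
  exact ⟨⟨Int.emod_nonneg _ hT.ne', Int.emod_lt_of_pos _ hT⟩,
    ⟨Int.emod_nonneg _ hT.ne', Int.emod_lt_of_pos _ hT⟩⟩

/-- key 1-d nesting identity -/
lemma ediv_sub_emod (x : ℤ) (T : ℕ) :
    (x - x % 2 ^ T) / 2 ^ (T + 1) = x / 2 ^ (T + 1) := by
  have ha : (0 : ℤ) < 2 ^ T := by positivity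
  have hb : (0 : ℤ) < 2 ^ (T + 1) := by positivity
  have hdvd : (2 : ℤ) ^ T ∣ 2 ^ (T + 1) := pow_dvd_pow 2 (Nat.le_succ T)
  set a : ℤ := 2 ^ T
  set b : ℤ := 2 ^ (T + 1)
  have hmm : x % b % a = x % a := Int.emod_emod_of_dvd x hdvd
  set w : ℤ := x % b - x % b % a with hw
  have hsplit : x - x % a = w + b * (x / b) := by
    rw [hw, hmm, Int.emod_def x b]; ring
  have hw0 : 0 ≤ w := by
    rw [hw, Int.emod_def (x % b) a]
    have h1 : 0 ≤ x % b := Int.emod_nonneg _ hb.ne'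
    have h2 : 0 ≤ x % b / a := Int.ediv_nonneg h1 ha.le
    nlinarith
  have hwb : w < b := by
    have h1 : x % b < b := Int.emod_lt_of_pos _ hb
    have h2 : 0 ≤ x % b % a := Int.emod_nonneg _ ha.ne'
    rw [hw]; linarith
  rw [hsplit, Int.add_mul_ediv_left _ _ hb.ne', Int.ediv_eq_zero_of_lt hw0 hwb, zero_add]

lemma gpi_nest (c z : Vertex) (T : ℕ) :
    gpi c (T + 1) (gpi c T z) = gpi c (T + 1) z := by
  have h1 : (gpi c T z).1 - c.1 = (z.1 - c.1) - (z.1 - c.1) % 2 ^ T := by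
    have := sub_gpi_fst c z T; omega
  have h2 : (gpi c T z).2 - c.2 = (z.2 - c.2) - (z.2 - c.2) % 2 ^ T := by
    have := sub_gpi_snd c z T; omega
  simp only [gpi] at h1 h2 ⊢
  simp only [Prod.mk.injEq]
  constructor
  · rw [show c.1 + 2 ^ T * ((z.1 - c.1) / 2 ^ T) - c.1 = 2 ^ T * ((z.1 - c.1) / 2 ^ T) by ring]
    rw [show (2:ℤ) ^ T * ((z.1 - c.1) / 2 ^ T) = (z.1 - c.1) - (z.1 - c.1) % 2 ^ T by
      rw [Int.emod_def]; ring]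
    rw [ediv_sub_emod]
  · rw [show c.2 + 2 ^ T * ((z.2 - c.2) / 2 ^ T) - c.2 = 2 ^ T * ((z.2 - c.2) / 2 ^ T) by ring]
    rw [show (2:ℤ) ^ T * ((z.2 - c.2) / 2 ^ T) = (z.2 - c.2) - (z.2 - c.2) % 2 ^ T by
      rw [Int.emod_def]; ring]
    rw [ediv_sub_emod]

lemma gpi_mem_box {c z : Vertex} {L : ℕ} (hz : z ∈ boxAt c L) (T : ℕ) :
    gpi c T z ∈ boxAt c L := by
  rw [mem_boxAt] at hz ⊢
  obtain ⟨⟨h1, h2⟩, h3, h4⟩ := hz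
  have d1 := (gpi_dist c z T).1
  have d2 := (gpi_dist c z T).2
  have m1 : 0 ≤ (z.1 - c.1) % 2 ^ T := Int.emod_nonneg _ (by positivity)
  have m2 : 0 ≤ (z.2 - c.2) % 2 ^ T := Int.emod_nonneg _ (by positivity)
  have e1 := sub_gpi_fst c z T
  have e2 := sub_gpi_snd c z T
  have l1 : (z.1 - c.1) % 2 ^ T ≤ z.1 - c.1 := by
    rw [Int.emod_def]
    have : 0 ≤ (z.1 - c.1) / 2 ^ T := Int.ediv_nonneg (by linarith) (by positivity)
    nlinarith [this]
  have l2 : (z.2 - c.2) % 2 ^ T ≤ z.2 - c.2 := by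
    rw [Int.emod_def]
    have : 0 ≤ (z.2 - c.2) / 2 ^ T := Int.ediv_nonneg (by linarith) (by positivity)
    nlinarith [this]
  omega

lemma gpi_top {c z : Vertex} {s : ℕ} (hz : z ∈ boxAt c (2 ^ s)) : gpi c s z = c := by
  rw [mem_boxAt] at hz
  obtain ⟨⟨h1, h2⟩, h3, h4⟩ := hz
  have hL : (0:ℤ) < 2 ^ s := by positivity
  have q1 : (z.1 - c.1) / 2 ^ s = 0 := Int.ediv_eq_zero_of_lt (by linarith) (by push_cast at h3 ⊢; omega)
  have q2 : (z.2 - c.2) / 2 ^ s = 0 := Int.ediv_eq_zero_of_lt (by linarith) (by push_cast at h4 ⊢; omega)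
  simp [gpi, q1, q2]

lemma card_image_gpi (c : Vertex) (s T : ℕ) (hT : T ≤ s) :
    ((boxAt c (2 ^ s)).image (gpi c T)).card ≤ 4 ^ (s - T) := by
  set m := s - T with hm
  have hsm : T + m = s := by omega
  set t : Finset Vertex := Finset.Icc ((0 : ℤ), (0 : ℤ)) ((2 ^ m - 1 : ℤ), (2 ^ m - 1 : ℤ)) with ht
  have hcard_t : t.card = 4 ^ m := by
    rw [ht, Finset.Icc_prod_def, Finset.card_product]
    simp only [Int.card_Icc]
    have : ((2:ℤ) ^ m - 1 + 1 - 0).toNat = 2 ^ m := by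
      rw [show (2:ℤ) ^ m - 1 + 1 - 0 = ((2 ^ m : ℕ) : ℤ) by push_cast; ring, Int.toNat_natCast]
    rw [this, ← mul_pow]
    norm_num
  rw [← hcard_t]
  apply Finset.card_le_card_of_injOn (fun u => ((u.1 - c.1) / 2 ^ T, (u.2 - c.2) / 2 ^ T))
  · intro u hu
    rw [Finset.mem_coe, Finset.mem_image] at hu
    obtain ⟨z, hz, rfl⟩ := hu
    rw [mem_boxAt] at hz
    obtain ⟨⟨h1, h2⟩, h3, h4⟩ := hz
    have hL : ((2:ℤ) ^ s) = 2 ^ T * 2 ^ m := by rw [← pow_add, hsm]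
    simp only [gpi, ht, Finset.mem_coe, Finset.mem_Icc, Prod.le_def]
    have hTpos : (0:ℤ) < 2 ^ T := by positivity
    rw [show c.1 + 2 ^ T * ((z.1 - c.1) / 2 ^ T) - c.1 = 2 ^ T * ((z.1 - c.1) / 2 ^ T) by ring]
    rw [show c.2 + 2 ^ T * ((z.2 - c.2) / 2 ^ T) - c.2 = 2 ^ T * ((z.2 - c.2) / 2 ^ T) by ring]
    rw [Int.mul_ediv_cancel_left _ hTpos.ne', Int.mul_ediv_cancel_left _ hTpos.ne']
    have b1 : 0 ≤ (z.1 - c.1) / 2 ^ T := Int.ediv_nonneg (by linarith) hTpos.le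
    have b2 : 0 ≤ (z.2 - c.2) / 2 ^ T := Int.ediv_nonneg (by linarith) hTpos.le
    have u1 : (z.1 - c.1) / 2 ^ T < 2 ^ m := by
      apply Int.ediv_lt_of_lt_mul hTpos
      have : (z.1 - c.1) < 2 ^ s := by push_cast at h3; omega
      rw [hL] at this; linarith [this]
    have u2 : (z.2 - c.2) / 2 ^ T < 2 ^ m := by
      apply Int.ediv_lt_of_lt_mul hTpos
      have : (z.2 - c.2) < 2 ^ s := by push_cast at h4; omega
      rw [hL] at this; linarith [this]
    exact ⟨⟨b1, b2⟩, by omega, by omega⟩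
  · intro u hu u' hu' heq
    simp only [Finset.coe_image, Set.mem_image, Finset.mem_coe] at hu hu'
    obtain ⟨z, hz, rfl⟩ := hu
    obtain ⟨z', hz', rfl⟩ := hu'
    simp only [gpi, Prod.mk.injEq] at heq ⊢
    have hTpos : (0:ℤ) < 2 ^ T := by positivity
    rw [show c.1 + 2 ^ T * ((z.1 - c.1) / 2 ^ T) - c.1 = 2 ^ T * ((z.1 - c.1) / 2 ^ T) by ring,
      show c.2 + 2 ^ T * ((z.2 - c.2) / 2 ^ T) - c.2 = 2 ^ T * ((z.2 - c.2) / 2 ^ T) by ring,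
      show c.1 + 2 ^ T * ((z'.1 - c.1) / 2 ^ T) - c.1 = 2 ^ T * ((z'.1 - c.1) / 2 ^ T) by ring,
      show c.2 + 2 ^ T * ((z'.2 - c.2) / 2 ^ T) - c.2 = 2 ^ T * ((z'.2 - c.2) / 2 ^ T) by ring,
      Int.mul_ediv_cancel_left _ hTpos.ne', Int.mul_ediv_cancel_left _ hTpos.ne',
      Int.mul_ediv_cancel_left _ hTpos.ne', Int.mul_ediv_cancel_left _ hTpos.ne'] at heq
    exact ⟨by rw [heq.1], by rw [heq.2]⟩

/-- cardinality bound for the difference of two corner windows -/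
lemma card_corners_sdiff (s : ℕ) (u u' : Vertex) (D : ℕ)
    (h1 : |u.1 - u'.1| ≤ D) (h2 : |u.2 - u'.2| ≤ D) :
    (corners s u \ corners s u').card ≤ 4 * D * 2 ^ s := by
  have hprod : ∀ v : Vertex, corners s v =
      Finset.Icc (v.1 - 2 ^ s + 1) v.1 ×ˢ Finset.Icc (v.2 - 2 ^ s + 1) v.2 := by
    intro v
    rw [corners, Finset.Icc_prod_def]
  have hsub : corners s u \ corners s u' ⊆
      ((Finset.Icc (u.1 - 2 ^ s + 1) u.1 \ Finset.Icc (u'.1 - 2 ^ s + 1) u'.1) ×ˢ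
        Finset.Icc (u.2 - 2 ^ s + 1) u.2) ∪
      (Finset.Icc (u.1 - 2 ^ s + 1) u.1 ×ˢ
        (Finset.Icc (u.2 - 2 ^ s + 1) u.2 \ Finset.Icc (u'.2 - 2 ^ s + 1) u'.2)) := by
    intro p hp
    rw [Finset.mem_sdiff, hprod u, hprod u', Finset.mem_product, Finset.mem_product] at hp
    obtain ⟨⟨hp1, hp2⟩, hp3⟩ := hp
    rw [Finset.mem_union, Finset.mem_product, Finset.mem_product, Finset.mem_sdiff,
      Finset.mem_sdiff]
    by_cases hc : p.1 ∈ Finset.Icc (u'.1 - 2 ^ s + 1) u'.1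
    · right; exact ⟨hp1, hp2, fun hc2 => hp3 ⟨hc, hc2⟩⟩
    · left; exact ⟨⟨hp1, hc⟩, hp2⟩
  have hIcc_diff : ∀ a a' : ℤ, |a - a'| ≤ D →
      (Finset.Icc (a - 2 ^ s + 1) a \ Finset.Icc (a' - 2 ^ s + 1) a').card ≤ 2 * D := by
    intro a a' hD
    have hsub2 : Finset.Icc (a - 2 ^ s + 1) a \ Finset.Icc (a' - 2 ^ s + 1) a' ⊆
        Finset.Icc (a - 2 ^ s + 1) (a' - 2 ^ s) ∪ Finset.Icc (a' + 1) a := by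
      intro x hx
      rw [Finset.mem_sdiff, Finset.mem_Icc, Finset.mem_Icc] at hx
      rw [Finset.mem_union, Finset.mem_Icc, Finset.mem_Icc]
      omega
    calc (Finset.Icc (a - 2 ^ s + 1) a \ Finset.Icc (a' - 2 ^ s + 1) a').card
        ≤ (Finset.Icc (a - 2 ^ s + 1) (a' - 2 ^ s) ∪ Finset.Icc (a' + 1) a).card :=
          Finset.card_le_card hsub2
      _ ≤ (Finset.Icc (a - 2 ^ s + 1) (a' - 2 ^ s)).card + (Finset.Icc (a' + 1) a).card :=
          Finset.card_union_le _ _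
      _ ≤ 2 * D := by
          rw [Int.card_Icc, Int.card_Icc]
          rw [abs_le] at hD
          omega
  have hcard_Icc : ∀ a : ℤ, (Finset.Icc (a - 2 ^ s + 1) a).card = 2 ^ s := by
    intro a
    rw [Int.card_Icc]
    have : a + 1 - (a - 2 ^ s + 1) = 2 ^ s := by ring
    rw [this, show (2:ℤ) ^ s = ((2 ^ s : ℕ) : ℤ) by push_cast; ring, Int.toNat_natCast]
  calc (corners s u \ corners s u').card
      ≤ (((Finset.Icc (u.1 - 2 ^ s + 1) u.1 \ Finset.Icc (u'.1 - 2 ^ s + 1) u'.1) ×ˢ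
        Finset.Icc (u.2 - 2 ^ s + 1) u.2) ∪
      (Finset.Icc (u.1 - 2 ^ s + 1) u.1 ×ˢ
        (Finset.Icc (u.2 - 2 ^ s + 1) u.2 \ Finset.Icc (u'.2 - 2 ^ s + 1) u'.2))).card :=
        Finset.card_le_card hsub
    _ ≤ ((Finset.Icc (u.1 - 2 ^ s + 1) u.1 \ Finset.Icc (u'.1 - 2 ^ s + 1) u'.1) ×ˢ
        Finset.Icc (u.2 - 2 ^ s + 1) u.2).card +
        (Finset.Icc (u.1 - 2 ^ s + 1) u.1 ×ˢ
        (Finset.Icc (u.2 - 2 ^ s + 1) u.2 \ Finset.Icc (u'.2 - 2 ^ s + 1) u'.2)).card :=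
        Finset.card_union_le _ _
    _ ≤ 2 * D * 2 ^ s + 2 ^ s * (2 * D) := by
        rw [Finset.card_product, Finset.card_product]
        have := hIcc_diff u.1 u'.1 h1
        have := hIcc_diff u.2 u'.2 h2
        have := hcard_Icc u.1
        have := hcard_Icc u.2
        apply add_le_add
        · apply Nat.mul_le_mul <;> omega
        · apply Nat.mul_le_mul <;> omega
    _ = 4 * D * 2 ^ s := by ring


section MgfMap
variable {Ω : Type} [MeasureSpace Ω] {X : Ω → ℝ} {v : ℝ≥0}

lemma integrable_exp_of_map (hX : Measurable X) (h : Measure.map X ℙ = gaussianReal 0 v)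
    (t : ℝ) : Integrable (fun ω => rexp (t * X ω)) ℙ := by
  have h2 : Integrable ((fun x => rexp (t * x)) ∘ X) ℙ := by
    rw [← integrable_map_measure
      (by fun_prop : Measurable fun x => rexp (t * x)).aestronglyMeasurable
      hX.aemeasurable, h]
    exact integrable_exp_gaussianReal v t
  exact h2

lemma integral_exp_of_map (hX : Measurable X) (h : Measure.map X ℙ = gaussianReal 0 v)
    (t : ℝ) : ∫ ω, rexp (t * X ω) ∂ℙ = rexp (t ^ 2 * v / 2) := by
  have h2 : ∫ y, rexp (t * y) ∂(Measure.map X ℙ) = ∫ ω, rexp (t * X ω) ∂ℙ :=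
    integral_map hX.aemeasurable
      (by fun_prop : Measurable fun x => rexp (t * x)).aestronglyMeasurable
  rw [h, integral_exp_gaussianReal v t] at h2
  exact h2.symm

end MgfMap

section Signed
variable {Ω : Type} [MeasureSpace Ω] [IsProbabilityMeasure (ℙ : Measure Ω)]
  {b : ℕ × Vertex → Ω → ℝ}

/-- mgf facts for a ±-signed sum of the Gaussians at level `s` with coefficient `a`. -/
lemma mgf_signed (hG : GaussianSetup b) (s : ℕ) (S : Finset Vertex) (η : Vertex → ℝ)
    (hη : ∀ c, η c = 1 ∨ η c = -1) (a t : ℝ) :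
    Integrable (fun ω => rexp (t * ∑ c ∈ S, η c * (a * b (s, c) ω))) ℙ ∧
    ∫ ω, rexp (t * ∑ c ∈ S, η c * (a * b (s, c) ω)) ∂ℙ
      = rexp (t ^ 2 * (a ^ 2 * (((2 : ℝ) ^ (2 * s))⁻¹) * S.card) / 2) := by
  obtain ⟨hmeas, hindep, hlaw⟩ := hG
  set κ : ℕ × Vertex → ℝ := fun i => if i.1 = s then η i.2 * a else 0 with hκ
  set Y : ℕ × Vertex → Ω → ℝ := fun i ω => κ i * b i ω with hY
  have hYmeas : ∀ i, Measurable (Y i) := fun i => (hmeas i).const_mul _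
  have hYindep : iIndepFun Y ℙ :=
    hindep.comp (fun i => fun x => κ i * x) (fun i => measurable_id.const_mul _)
  set S' : Finset (ℕ × Vertex) := S.image (fun c => (s, c)) with hS'
  have hinj : ∀ x ∈ S, ∀ y ∈ S, (s, x) = (s, y) → x = y := by
    intro x _ y _ h; simpa using h
  -- each factor
  have hfac : ∀ c : Vertex, Integrable (fun ω => rexp (t * Y (s, c) ω)) ℙ ∧
      ∫ ω, rexp (t * Y (s, c) ω) ∂ℙ
        = rexp (t ^ 2 * (a ^ 2 * ((2 : ℝ) ^ (2 * s))⁻¹) / 2) := by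
    intro c
    have hκc : κ (s, c) = η c * a := by simp [hκ]
    have h1 : (fun ω => rexp (t * Y (s, c) ω)) = fun ω => rexp ((t * κ (s, c)) * b (s, c) ω) := by
      funext ω; rw [hY]; ring_nf
    have hint := integrable_exp_of_map (hmeas (s, c)) (hlaw s c) (t * κ (s, c))
    have hval := integral_exp_of_map (hmeas (s, c)) (hlaw s c) (t * κ (s, c))
    rw [← h1] at hint hval
    refine ⟨hint, ?_⟩
    rw [hval]
    congr 1
    have hcoe : ((((2 : ℝ≥0) ^ (2 * s))⁻¹ : ℝ≥0) : ℝ) = ((2 : ℝ) ^ (2 * s))⁻¹ := by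
      push_cast; ring
    rw [hcoe, hκc]
    rcases hη c with h | h <;> rw [h] <;> ring
  -- sum over S'
  have hsum_eq : ∀ ω, (∑ i ∈ S', Y i) ω = ∑ c ∈ S, η c * (a * b (s, c) ω) := by
    intro ω
    rw [Finset.sum_apply, hS', Finset.sum_image hinj]
    refine Finset.sum_congr rfl fun c _ => ?_
    simp [hY, hκ]; ring
  have hint : Integrable (fun ω => rexp (t * (∑ i ∈ S', Y i) ω)) ℙ :=
    hYindep.integrable_exp_mul_sum hYmeas (fun i _ => by
      rcases i with ⟨m, c⟩
      by_cases hm : m = s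
      · subst hm; exact (hfac c).1
      · have : (fun ω => rexp (t * Y (m, c) ω)) = fun _ => 1 := by
          funext ω; simp [hY, hκ, hm]
        rw [this]; exact integrable_const 1)
  have hmgf := hYindep.mgf_sum (t := t) hYmeas S'
  constructor
  · refine hint.congr ?_
    exact Filter.Eventually.of_forall fun ω => by beta_reduce; rw [hsum_eq ω]
  · have hlhs : ∫ ω, rexp (t * ∑ c ∈ S, η c * (a * b (s, c) ω)) ∂ℙ
        = mgf (∑ i ∈ S', Y i) ℙ t := by
      rw [mgf]
      exact integral_congr_ae (Filter.Eventually.of_forall fun ω => by beta_reduce; rw [hsum_eq ω])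
    rw [hlhs, hmgf]
    have hcard : S'.card = S.card := Finset.card_image_of_injOn (fun x _ y _ h => by
      simpa using h)
    have : ∀ i ∈ S', mgf (Y i) ℙ t = rexp (t ^ 2 * (a ^ 2 * ((2 : ℝ) ^ (2 * s))⁻¹) / 2) := by
      intro i hi
      rw [hS', Finset.mem_image] at hi
      obtain ⟨c, _, rfl⟩ := hi
      exact (hfac c).2
    rw [Finset.prod_congr rfl this, Finset.prod_const, ← Real.exp_nat_mul, hcard]
    congr 1; ring

end Signed

end Aux

/-- **Lemma 2.7.** There is a universal constant C such that for all k ≥ 1, all j and every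
box B ∈ 𝓑_{jk} (with lower-left corner c), E max_{z ∈ B} ψ_{j,z} ≤ C √k. -/
theorem statement8 :
    ∃ C : ℝ, ∀ (Ω : Type) [MeasureSpace Ω] [IsProbabilityMeasure (ℙ : Measure Ω)]
      (b : ℕ × Vertex → Ω → ℝ), GaussianSetup b →
      ∀ k : ℕ, 1 ≤ k → ∀ j : ℕ, ∀ c : Vertex,
        (∫ ω, fmax (boxAt c (2 ^ (j * k))) (fun z => psi b k j z ω) ∂ℙ) ≤
          C * Real.sqrt k := by
  refine ⟨200, ?_⟩
  intro Ω _ _ b hG k hk j c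
  have hkR : (1 : ℝ) ≤ (k : ℝ) := by exact_mod_cast hk
  have hkpos : (0 : ℝ) < (k : ℝ) := by linarith
  have hsqk : Real.sqrt k ^ 2 = (k : ℝ) := Real.sq_sqrt hkpos.le
  set lev : ℕ := j * k with hlev
  set L : ℕ := 2 ^ lev with hL
  set B : Finset Vertex := boxAt c L with hB
  have hLpos : 1 ≤ L := Nat.one_le_two_pow
  have hcB : c ∈ B := by
    rw [hB, mem_boxAt]
    refine ⟨⟨le_refl _, le_refl _⟩, ?_, ?_⟩ <;> · push_cast; omega
  have hBne : B.Nonempty := ⟨c, hcB⟩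
  -- measurability of psi
  have hψmeas : ∀ z : Vertex, Measurable (fun ω => psi b k j z ω) := by
    intro z
    unfold psi
    exact Finset.measurable_sum _ (fun c' _ => (hG.1 _).const_mul _)
  -- the difference of two psi's as a signed sum
  have hpsi_diff : ∀ u u' : Vertex, ∀ ω : Ω,
      psi b k j u ω - psi b k j u' ω
        = ∑ c' ∈ (corners lev u \ corners lev u') ∪ (corners lev u' \ corners lev u),
            (if c' ∈ corners lev u then (1 : ℝ) else -1) * (Real.sqrt k * b (lev, c') ω) := by
    intro u u' ω
    rw [Finset.sum_union disjoint_sdiff_sdiff]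
    have e1 : ∑ c' ∈ corners lev u \ corners lev u',
        (if c' ∈ corners lev u then (1 : ℝ) else -1) * (Real.sqrt k * b (lev, c') ω)
        = ∑ c' ∈ corners lev u \ corners lev u', Real.sqrt k * b (lev, c') ω :=
      Finset.sum_congr rfl (fun c' hc' => by
        rw [if_pos (Finset.mem_sdiff.1 hc').1, one_mul])
    have e2 : ∑ c' ∈ corners lev u' \ corners lev u,
        (if c' ∈ corners lev u then (1 : ℝ) else -1) * (Real.sqrt k * b (lev, c') ω)
        = -∑ c' ∈ corners lev u' \ corners lev u, Real.sqrt k * b (lev, c') ω := by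
      rw [← Finset.sum_neg_distrib]
      exact Finset.sum_congr rfl (fun c' hc' => by
        rw [if_neg (Finset.mem_sdiff.1 hc').2, neg_one_mul])
    have h1 := Finset.sum_inter_add_sum_sdiff (corners lev u) (corners lev u')
      (fun c' => Real.sqrt k * b (lev, c') ω)
    have h2 := Finset.sum_inter_add_sum_sdiff (corners lev u') (corners lev u)
      (fun c' => Real.sqrt k * b (lev, c') ω)
    have hint : ∑ c' ∈ corners lev u ∩ corners lev u', Real.sqrt k * b (lev, c') ω
        = ∑ c' ∈ corners lev u' ∩ corners lev u, Real.sqrt k * b (lev, c') ω := by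
      rw [Finset.inter_comm]
    unfold psi
    rw [e1, e2]
    rw [show j * k = lev from rfl]
    linarith
  -- cardinality of a corner window
  have hcard_corners : ∀ z : Vertex, (corners lev z).card = 2 ^ lev * 2 ^ lev := by
    intro z
    rw [corners, Finset.Icc_prod_def, Finset.card_product]
    simp only [Int.card_Icc]
    have e : ∀ a : ℤ, (a + 1 - (a - 2 ^ lev + 1)).toNat = 2 ^ lev := by
      intro a
      rw [show a + 1 - (a - 2 ^ lev + 1) = ((2 ^ lev : ℕ) : ℤ) by push_cast; ring,
        Int.toNat_natCast]
    rw [e z.1, e z.2]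
  -- variance numerics for level i
  have hpow_eq : ∀ i : ℕ, i < lev →
      ((2 : ℝ) ^ (2 * lev))⁻¹ * (8 * 2 ^ (lev - i) * 2 ^ lev) = 8 * (1 / 2) ^ i := by
    intro i hi
    have h2 : (2 : ℝ) ^ (2 * lev) = 2 ^ (lev - i) * 2 ^ lev * 2 ^ i := by
      rw [← pow_add, ← pow_add]; congr 1; omega
    rw [h2, one_div, inv_pow]
    have hp : (0:ℝ) < (2:ℝ) ^ (lev - i) := by positivity
    have hq : (0:ℝ) < (2:ℝ) ^ lev := by positivity
    have hr : (0:ℝ) < (2:ℝ) ^ i := by positivity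
    field_simp
  -- MGF bound for differences at level i
  have hmgf_diff : ∀ i : ℕ, i < lev → ∀ t : ℝ, ∀ u : Vertex,
      Integrable (fun ω => rexp (t * (psi b k j u ω - psi b k j (gpi c (lev - i) u) ω))) ℙ ∧
      ∫ ω, rexp (t * (psi b k j u ω - psi b k j (gpi c (lev - i) u) ω)) ∂ℙ
        ≤ rexp (t ^ 2 * Real.sqrt (8 * k * (1 / 2) ^ i) ^ 2 / 2) := by
    intro i hi t u
    set u' : Vertex := gpi c (lev - i) u with hu'
    set S : Finset Vertex := (corners lev u \ corners lev u') ∪ (corners lev u' \ corners lev u)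
      with hSdef
    set η : Vertex → ℝ := fun c' => if c' ∈ corners lev u then (1 : ℝ) else -1 with hη
    have hηpm : ∀ c', η c' = 1 ∨ η c' = -1 := by
      intro c'; rw [hη]; by_cases h : c' ∈ corners lev u <;> simp [h]
    have hfun : (fun ω => rexp (t * (psi b k j u ω - psi b k j u' ω)))
        = fun ω => rexp (t * ∑ c' ∈ S, η c' * (Real.sqrt k * b (lev, c') ω)) :=
      funext fun ω => by rw [hpsi_diff u u' ω]
    have hms := mgf_signed hG lev S η hηpm (Real.sqrt k) t
    -- distance bound
    have hdist := gpi_dist c u (lev - i)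
    set D : ℕ := 2 ^ (lev - i) with hD
    have habs1 : |u.1 - u'.1| ≤ (D : ℤ) := by
      have h1 := hdist.1
      rw [hu']
      rw [abs_le]
      constructor
      · linarith [h1.1]
      · have := h1.2
        have hcast : ((D : ℤ)) = 2 ^ (lev - i) := by rw [hD]; push_cast; ring
        omega
    have habs2 : |u.2 - u'.2| ≤ (D : ℤ) := by
      have h2 := hdist.2
      rw [hu']
      rw [abs_le]
      constructor
      · linarith [h2.1]
      · have := h2.2
        have hcast : ((D : ℤ)) = 2 ^ (lev - i) := by rw [hD]; push_cast; ring
        omega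
    have habs1' : |u'.1 - u.1| ≤ (D : ℤ) := by rw [abs_sub_comm]; exact habs1
    have habs2' : |u'.2 - u.2| ≤ (D : ℤ) := by rw [abs_sub_comm]; exact habs2
    have hcardS : S.card ≤ 8 * D * 2 ^ lev := by
      calc S.card ≤ (corners lev u \ corners lev u').card
          + (corners lev u' \ corners lev u).card := Finset.card_union_le _ _
      _ ≤ 4 * D * 2 ^ lev + 4 * D * 2 ^ lev :=
          add_le_add (card_corners_sdiff lev u u' D habs1 habs2)
            (card_corners_sdiff lev u' u D habs1' habs2')
      _ = 8 * D * 2 ^ lev := by ring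
    -- variance comparison
    have hvar : Real.sqrt k ^ 2 * ((2 : ℝ) ^ (2 * lev))⁻¹ * S.card
        ≤ 8 * k * (1 / 2) ^ i := by
      have hcS : (S.card : ℝ) ≤ 8 * 2 ^ (lev - i) * 2 ^ lev := by
        have : (S.card : ℝ) ≤ ((8 * D * 2 ^ lev : ℕ) : ℝ) := by exact_mod_cast hcardS
        calc (S.card : ℝ) ≤ ((8 * D * 2 ^ lev : ℕ) : ℝ) := this
        _ = 8 * 2 ^ (lev - i) * 2 ^ lev := by rw [hD]; push_cast; ring
      have hvpos : (0:ℝ) < ((2 : ℝ) ^ (2 * lev))⁻¹ := by positivity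
      calc Real.sqrt k ^ 2 * ((2 : ℝ) ^ (2 * lev))⁻¹ * S.card
          = (k : ℝ) * (((2 : ℝ) ^ (2 * lev))⁻¹ * S.card) := by rw [hsqk]; ring
      _ ≤ (k : ℝ) * (((2 : ℝ) ^ (2 * lev))⁻¹ * (8 * 2 ^ (lev - i) * 2 ^ lev)) := by
          apply mul_le_mul_of_nonneg_left _ hkpos.le
          exact mul_le_mul_of_nonneg_left hcS hvpos.le
      _ = (k : ℝ) * (8 * (1 / 2) ^ i) := by rw [hpow_eq i hi]
      _ = 8 * k * (1 / 2) ^ i := by ring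
    have hσsq : Real.sqrt (8 * k * (1 / 2) ^ i) ^ 2 = 8 * (k : ℝ) * (1 / 2) ^ i := by
      rw [Real.sq_sqrt (by positivity)]
    constructor
    · rw [hfun]; exact hms.1
    · rw [hfun, hms.2, hσsq]
      apply Real.exp_le_exp.2
      have ht2 : (0:ℝ) ≤ t ^ 2 := sq_nonneg t
      have := hvar
      nlinarith
  -- MGF bound for the base variable psi at c
  have hmgf_base : ∀ t : ℝ, ∀ u : Vertex, u ∈ ({c} : Finset Vertex) →
      Integrable (fun ω => rexp (t * psi b k j u ω)) ℙ ∧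
      ∫ ω, rexp (t * psi b k j u ω) ∂ℙ ≤ rexp (t ^ 2 * Real.sqrt k ^ 2 / 2) := by
    intro t u hu
    rw [Finset.mem_singleton] at hu
    rw [hu]
    have hms := mgf_signed hG lev (corners lev c) (fun _ => (1:ℝ)) (fun _ => Or.inl rfl)
      (Real.sqrt k) t
    have hfun : (fun ω => rexp (t * psi b k j c ω))
        = fun ω => rexp (t * ∑ c' ∈ corners lev c, (1:ℝ) * (Real.sqrt k * b (lev, c') ω)) := by
      funext ω
      congr 1
      unfold psi
      rw [show j * k = lev from rfl]
      exact congrArg (t * ·) (Finset.sum_congr rfl fun c' _ => (one_mul _).symm)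
    constructor
    · rw [hfun]; exact hms.1
    · rw [hfun, hms.2]
      apply Real.exp_le_exp.2
      have hcc : ((corners lev c).card : ℝ) = 2 ^ lev * 2 ^ lev := by
        rw [hcard_corners c]; push_cast; ring
      have h2lev : (2:ℝ) ^ (2 * lev) = 2 ^ lev * 2 ^ lev := by
        rw [two_mul, pow_add]
      have heq : Real.sqrt k ^ 2 * ((2 : ℝ) ^ (2 * lev))⁻¹ * ((corners lev c).card : ℝ)
          = Real.sqrt k ^ 2 := by
        rw [hcc, h2lev, hsqk]
        have : (0:ℝ) < (2:ℝ) ^ lev := by positivity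
        field_simp
      rw [heq]

  -- per-level expected-max bounds
  have hlevel : ∀ i ∈ Finset.range lev,
      Integrable (fun ω => (B.image (gpi c (lev - (i+1)))).sup'
          (hBne.image _) (fun u => psi b k j u ω - psi b k j (gpi c (lev - i) u) ω)) ℙ ∧
      (∫ ω, (B.image (gpi c (lev - (i+1)))).sup' (hBne.image _)
          (fun u => psi b k j u ω - psi b k j (gpi c (lev - i) u) ω) ∂ℙ)
        ≤ 18 * Real.sqrt k * ((Real.sqrt (Real.sqrt 2))⁻¹) ^ i := by
    intro i hi
    rw [Finset.mem_range] at hi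
    have hNne : (B.image (gpi c (lev - (i+1)))).Nonempty := hBne.image _
    have hσpos : (0:ℝ) < Real.sqrt (8 * k * (1/2) ^ i) :=
      Real.sqrt_pos.2 (by positivity)
    have hXmeas : ∀ u : Vertex,
        Measurable (fun ω => psi b k j u ω - psi b k j (gpi c (lev - i) u) ω) :=
      fun u => (hψmeas u).sub (hψmeas _)
    have hemax := emax_bound (B.image (gpi c (lev - (i+1)))) hNne _ hXmeas
      (Real.sqrt (8 * k * (1/2) ^ i)) hσpos (fun t u _ => hmgf_diff i hi t u)
    refine ⟨hemax.1, le_trans hemax.2 ?_⟩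
    have hcard : (B.image (gpi c (lev - (i+1)))).card ≤ 4 ^ (i+1) := by
      have h := card_image_gpi c lev (lev - (i+1)) (by omega)
      rw [show lev - (lev - (i+1)) = i + 1 by omega] at h
      exact h
    exact level_bound k hk i _ hcard
  -- base level bound
  have hbase := emax_bound ({c} : Finset Vertex) (Finset.singleton_nonempty c)
    (fun u ω => psi b k j u ω) (fun u => hψmeas u) (Real.sqrt k)
    (Real.sqrt_pos.2 hkpos) hmgf_base
  have hsingle : (fun ω => ({c} : Finset Vertex).sup' (Finset.singleton_nonempty c)
      (fun u => psi b k j u ω)) = fun ω => psi b k j c ω :=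
    funext fun ω => by simp
  have hbase_int : Integrable (fun ω => psi b k j c ω) ℙ := by
    rw [← hsingle]; exact hbase.1
  have hbase_val : (∫ ω, psi b k j c ω ∂ℙ) ≤ 3 * Real.sqrt k := by
    have h1 := hbase.2
    rw [show (∫ ω, ({c} : Finset Vertex).sup' (Finset.singleton_nonempty c)
        (fun u => psi b k j u ω) ∂ℙ) = ∫ ω, psi b k j c ω ∂ℙ by
      exact congrArg _ hsingle] at h1
    refine le_trans h1 ?_
    have hc1 : (({c} : Finset Vertex).card : ℝ) = 1 := by
      rw [Finset.card_singleton]; norm_num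
    rw [hc1]
    have hlog : Real.log (1 + 1) ≤ 1 := by
      rw [show (1:ℝ) + 1 = 2 by norm_num]
      linarith [Real.log_two_lt_d9]
    have hs1 : Real.sqrt (Real.log (1 + 1)) ≤ 1 := by
      rcases le_or_gt (Real.log (1+1)) 0 with h | h
      · rw [Real.sqrt_eq_zero'.2 h]; norm_num
      · calc Real.sqrt (Real.log (1+1)) ≤ Real.sqrt 1 := Real.sqrt_le_sqrt hlog
        _ = 1 := Real.sqrt_one
    calc 3 * Real.sqrt k * Real.sqrt (Real.log (1 + 1)) ≤ 3 * Real.sqrt k * 1 :=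
        mul_le_mul_of_nonneg_left hs1 (by positivity)
    _ = 3 * Real.sqrt k := by ring
  -- pointwise chaining bound
  have hchain : ∀ ω : Ω, fmax B (fun z => psi b k j z ω)
      ≤ psi b k j c ω + ∑ i ∈ Finset.range lev,
          (B.image (gpi c (lev - (i+1)))).sup' (hBne.image _)
            (fun u => psi b k j u ω - psi b k j (gpi c (lev - i) u) ω) := by
    intro ω
    rw [fmax]
    apply csSup_le ⟨_, Set.mem_image_of_mem _ (Finset.mem_coe.2 hcB)⟩
    rintro x ⟨z, hz, rfl⟩
    rw [Finset.mem_coe] at hz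
    have htel := Finset.sum_range_sub (fun m => psi b k j (gpi c (lev - m) z) ω) lev
    have hg0 : gpi c (lev - 0) z = c := by rw [Nat.sub_zero]; exact gpi_top hz
    have hgl : gpi c (lev - lev) z = z := by rw [Nat.sub_self]; exact gpi_zero c z
    have hsum_le : ∑ i ∈ Finset.range lev,
        (psi b k j (gpi c (lev - (i+1)) z) ω - psi b k j (gpi c (lev - i) z) ω)
        ≤ ∑ i ∈ Finset.range lev,
          (B.image (gpi c (lev - (i+1)))).sup' (hBne.image _)
            (fun u => psi b k j u ω - psi b k j (gpi c (lev - i) u) ω) := by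
      apply Finset.sum_le_sum
      intro i hi
      rw [Finset.mem_range] at hi
      have hmem : gpi c (lev - (i+1)) z ∈ B.image (gpi c (lev - (i+1))) :=
        Finset.mem_image_of_mem _ hz
      have hnest : gpi c (lev - i) (gpi c (lev - (i+1)) z) = gpi c (lev - i) z := by
        rw [show lev - i = (lev - (i+1)) + 1 by omega]
        exact gpi_nest c z (lev - (i+1))
      have hle := Finset.le_sup'
        (f := fun u => psi b k j u ω - psi b k j (gpi c (lev - i) u) ω) hmem
      rw [hnest] at hle
      exact hle
    have heq : psi b k j z ω - psi b k j c ω = ∑ i ∈ Finset.range lev,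
        (psi b k j (gpi c (lev - (i+1)) z) ω - psi b k j (gpi c (lev - i) z) ω) := by
      rw [htel, hg0, hgl]
    linarith
  -- the dominating function and integrability of fmax
  set G : Ω → ℝ := fun ω => psi b k j c ω + ∑ i ∈ Finset.range lev,
      (B.image (gpi c (lev - (i+1)))).sup' (hBne.image _)
        (fun u => psi b k j u ω - psi b k j (gpi c (lev - i) u) ω) with hGdef
  have hGint : Integrable G ℙ :=
    hbase_int.add (integrable_finset_sum _ (fun i hi => (hlevel i hi).1))
  have hfmax_eq : (fun ω => fmax B (fun z => psi b k j z ω))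
      = fun ω => B.sup' hBne (fun z => psi b k j z ω) :=
    funext fun ω => (Finset.sup'_eq_csSup_image B hBne _).symm
  have hfmax_meas : Measurable (fun ω => B.sup' hBne fun z => psi b k j z ω) := by
    have h := Finset.measurable_sup' hBne (fun z (_ : z ∈ B) => hψmeas z)
    convert h using 1
    funext ω
    exact (Finset.sup'_apply hBne _ ω).symm
  have hlow : ∀ ω, psi b k j c ω ≤ fmax B (fun z => psi b k j z ω) := by
    intro ω
    rw [fmax]
    exact le_csSup ((B.finite_toSet.image _).bddAbove)
      (Set.mem_image_of_mem _ (Finset.mem_coe.2 hcB))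
  have hfmax_int : Integrable (fun ω => fmax B (fun z => psi b k j z ω)) ℙ := by
    refine Integrable.mono' (hbase_int.abs.add hGint.abs) ?_
      (Filter.Eventually.of_forall fun ω => ?_)
    · rw [hfmax_eq]; exact hfmax_meas.aestronglyMeasurable
    · rw [Real.norm_eq_abs, abs_le]
      constructor
      · have h1 : -(|psi b k j c ω| + |G ω|) ≤ psi b k j c ω := by
          have := abs_nonneg (G ω); have := neg_abs_le (psi b k j c ω); linarith
        exact le_trans h1 (hlow ω)
      · have h2 : G ω ≤ |psi b k j c ω| + |G ω| := by
          have := abs_nonneg (psi b k j c ω); have := le_abs_self (G ω); linarith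
        exact le_trans (hchain ω) h2
  -- final assembly
  have hint_le : (∫ ω, fmax B (fun z => psi b k j z ω) ∂ℙ) ≤ ∫ ω, G ω ∂ℙ :=
    integral_mono hfmax_int hGint hchain
  have hGval : (∫ ω, G ω ∂ℙ) ≤ 3 * Real.sqrt k + 18 * Real.sqrt k * 7 := by
    rw [hGdef]
    rw [integral_add hbase_int (integrable_finset_sum _ (fun i hi => (hlevel i hi).1))]
    rw [integral_finset_sum _ (fun i hi => (hlevel i hi).1)]
    have hsum : ∑ i ∈ Finset.range lev,
        (∫ ω, (B.image (gpi c (lev - (i+1)))).sup' (hBne.image _)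
          (fun u => psi b k j u ω - psi b k j (gpi c (lev - i) u) ω) ∂ℙ)
        ≤ ∑ i ∈ Finset.range lev,
          18 * Real.sqrt k * ((Real.sqrt (Real.sqrt 2))⁻¹) ^ i :=
      Finset.sum_le_sum (fun i hi => (hlevel i hi).2)
    have hgeo : ∑ i ∈ Finset.range lev,
        18 * Real.sqrt k * ((Real.sqrt (Real.sqrt 2))⁻¹) ^ i ≤ 18 * Real.sqrt k * 7 := by
      rw [← Finset.mul_sum]
      apply mul_le_mul_of_nonneg_left (geom_sum_r_le lev) (by positivity)
    linarith
  have hfin : (3 : ℝ) * Real.sqrt k + 18 * Real.sqrt k * 7 ≤ 200 * Real.sqrt k := by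
    nlinarith [Real.sqrt_nonneg (k:ℝ)]
  calc (∫ ω, fmax B (fun z => psi b k j z ω) ∂ℙ) ≤ ∫ ω, G ω ∂ℙ := hint_le
  _ ≤ 3 * Real.sqrt k + 18 * Real.sqrt k * 7 := hGval
  _ ≤ 200 * Real.sqrt k := hfin


end
end
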